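/- arXiv:1705.08715 — 3 statements merged into one kernel-verified Lean document; each statement's English description precedes it below -/
import Mathlib

section
/- Let (X, A_τ, P) be a fully probabilistic transition system, p a path on X, and U ⊆ Path(X) a separated set of paths (U = U*, i.e., no two distinct elements of U are ⪯-comparable) such that p ⪯ q for all q ∈ U. Then Σ_{q ∈ U} μ_P(q) ≤ μ_P(p). -/
open scoped Classical ENNReal

namespace PaperBB

/-! ## Paths -/

/-- Words over the alphabet `A_τ = A ∪ {τ}`; `none` plays the role of the silent action `τ`. -/
abbrev Word (A : Type*) := List (Option A)

/-- A path on `X`: a function whose codomain is `X` and whose domain is the set of all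
prefixes of some word `σ ∈ A_τ*`. -/
structure Path (A : Type*) (X : Type*) where
  word : Word A
  fn : {σ : Word A // σ <+: word} → X

namespace Path

variable {A X Y : Type*}

theorem prefixSnoc (σ : Word A) (a : Option A) : σ <+: σ ++ [a] := ⟨[a], rfl⟩

theorem nilPrefix (w : Word A) : ([] : Word A) <+: w := ⟨w, rfl⟩

/-- The value `p(ε)` of a path at the empty word. -/
def start (p : Path A X) : X := p.fn ⟨[], nilPrefix _⟩

/-- The trace of a path: the maximal word in its domain. -/
def trace (p : Path A X) : Word A := p.word

/-- The last state reached by a path: `last p = p (trace p)`. -/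
def last (p : Path A X) : X := p.fn ⟨p.word, List.prefix_refl _⟩

/-- `Path(f)(p) = f ∘ p`. -/
def map (f : X → Y) (p : Path A X) : Path A Y := ⟨p.word, fun σ => f (p.fn σ)⟩

/-- The prefix order on paths: `p ⪯ q` iff `dom p ⊆ dom q` and `q` agrees with `p` on `dom p`. -/
def le (p q : Path A X) : Prop :=
  ∃ h : p.word <+: q.word, ∀ (σ : Word A) (hσ : σ <+: p.word),
    q.fn ⟨σ, hσ.trans h⟩ = p.fn ⟨σ, hσ⟩

/-- The strict prefix order on paths. -/
def lt (p q : Path A X) : Prop := p.le q ∧ p ≠ q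

/-- `φ` is a stutter basis for the path `p`. -/
def IsStutterBasis (p : Path A X) (φ : {σ : Word A // σ <+: p.word} → Word A) : Prop :=
  φ ⟨[], nilPrefix _⟩ = [] ∧
  (∀ (σ : Word A) (h : σ ++ [(none : Option A)] <+: p.word),
      (p.fn ⟨σ ++ [none], h⟩ = p.fn ⟨σ, (prefixSnoc σ none).trans h⟩ →
        φ ⟨σ ++ [none], h⟩ = φ ⟨σ, (prefixSnoc σ none).trans h⟩) ∧
      (p.fn ⟨σ ++ [none], h⟩ ≠ p.fn ⟨σ, (prefixSnoc σ none).trans h⟩ →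
        φ ⟨σ ++ [none], h⟩ = φ ⟨σ, (prefixSnoc σ none).trans h⟩ ++ [none])) ∧
  (∀ (σ : Word A) (a : A) (h : σ ++ [some a] <+: p.word),
      φ ⟨σ ++ [some a], h⟩ = φ ⟨σ, (prefixSnoc σ (some a)).trans h⟩ ++ [some a])

/-- Auxiliary recursion computing the stutter basis of `p` on the prefix of length `n`. -/
noncomputable def stutterWordAux (p : Path A X) : ℕ → Word A
  | 0 => []
  | n + 1 =>
    if h : n < p.word.length then
      if (p.word.get ⟨n, h⟩) = none ∧
          p.fn ⟨p.word.take (n + 1), List.take_prefix _ _⟩ =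
            p.fn ⟨p.word.take n, List.take_prefix _ _⟩ then
        stutterWordAux p n
      else stutterWordAux p n ++ [p.word.get ⟨n, h⟩]
    else []

/-- The (unique) stutter basis of a path `p`. -/
noncomputable def stutterBasis (p : Path A X) (σ : {σ : Word A // σ <+: p.word}) : Word A :=
  stutterWordAux p σ.1.length

/-- The stutter invariant path `♮p` relative to `p`: its domain is the image of the stutter
basis `φ` and it satisfies `♮p ∘ φ = p`. -/
noncomputable def stutter (p : Path A X) : Path A X where
  word := stutterBasis p ⟨p.word, List.prefix_refl _⟩
  fn := fun w =>
    haveI : Nonempty {σ : Word A // σ <+: p.word} := ⟨⟨[], nilPrefix _⟩⟩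
    p.fn (Function.invFun (stutterBasis p) w.1)

end Path

/-- Stutter equivalence of paths: `p ∼ q` iff `♮p = ♮q`. -/
def StutterEquiv {A X : Type*} (p q : Path A X) : Prop := p.stutter = q.stutter

instance pathSetoid (A X : Type*) : Setoid (Path A X) :=
  ⟨StutterEquiv, ⟨fun _ => rfl, Eq.symm, Eq.trans⟩⟩

/-- The set `Path_∼(X)` of paths up to stutter equivalence. -/
abbrev PathQuot (A X : Type*) := Quotient (pathSetoid A X)

/-- The quotient map `π : Path(X) → Path_∼(X)`. -/
def PathQuot.mk {A X : Type*} (p : Path A X) : PathQuot A X := Quotient.mk _ p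

/-- `Path_∼(f)[p] = [f ∘ p]`. -/
noncomputable def PathQuot.map {A X Y : Type*} (f : X → Y) (c : PathQuot A X) : PathQuot A Y :=
  PathQuot.mk (Path.map f c.out)

/-- The order on `Path_∼(X)`: `[p] ⪯ [q]` iff `♮p ⪯ ♮q`. -/
def PathQuot.le {A X : Type*} (c d : PathQuot A X) : Prop :=
  ∃ p q : Path A X, PathQuot.mk p = c ∧ PathQuot.mk q = d ∧ p.stutter.le q.stutter

/-- The set of words of the shape `τ*aτ*`. -/
def TauStarATauStar {A : Type*} (a : A) (w : Word A) : Prop :=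
  ∃ n m : ℕ, w = List.replicate n none ++ some a :: List.replicate m none

/-! ## Prefix orders, the sobrification `X∞`, Scott topology, valuations -/

section OrderTheory

variable {Z : Type*}

/-- Downward-closed subsets: the closed sets of the Alexandroff topology. -/
def IsDownClosed [Preorder Z] (C : Set Z) : Prop :=
  ∀ ⦃x⦄, x ∈ C → ∀ ⦃y⦄, y ≤ x → y ∈ C

/-- Irreducible closed subsets of the Alexandroff topology. -/
def IsIrredClosed [Preorder Z] (C : Set Z) : Prop :=
  IsDownClosed C ∧ C.Nonempty ∧
    ∀ C₁ C₂ : Set Z, IsDownClosed C₁ → IsDownClosed C₂ → C = C₁ ∪ C₂ → C = C₁ ∨ C = C₂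

/-- A set is non-sober if it is irreducible and closed (w.r.t. the Alexandroff topology) but is
not the closure (the principal ideal) of any single point. -/
def NonSober [Preorder Z] (C : Set Z) : Prop :=
  IsIrredClosed C ∧ ¬ ∃ x : Z, C = {y | y ≤ x}

/-- `X∞`: `X` together with a fresh limit point `∞_C` for every non-sober `C ⊆ X`. -/
def Extended (Z : Type*) [Preorder Z] := Z ⊕ {C : Set Z // NonSober C}

/-- The order `⪯'` on `X∞` extending `⪯` by `∞_C ⪯' ∞_C` and `x ⪯' ∞_C` for `x ∈ C`. -/
def extLE [Preorder Z] : Extended Z → Extended Z → Prop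
  | Sum.inl x, Sum.inl y => x ≤ y
  | Sum.inl x, Sum.inr C => x ∈ C.1
  | Sum.inr _, Sum.inl _ => False
  | Sum.inr C, Sum.inr D => C = D

instance [PartialOrder Z] : PartialOrder (Extended Z) where
  le := extLE
  le_refl a := by
    cases a with
    | inl x => exact le_refl x
    | inr C => exact rfl
  le_trans a b c hab hbc := by
    cases a with
    | inl x =>
      cases b with
      | inl y =>
        cases c with
        | inl z => exact le_trans hab hbc
        | inr C => exact C.2.1.1 hbc hab
      | inr C =>
        cases c with
        | inl z => exact False.elim hbc
        | inr D => exact (show C = D from hbc) ▸ hab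
    | inr C =>
      cases b with
      | inl y => exact False.elim hab
      | inr D =>
        cases c with
        | inl z => exact False.elim hbc
        | inr E => exact (show C = D from hab).trans (show D = E from hbc)
  le_antisymm a b hab hba := by
    cases a with
    | inl x =>
      cases b with
      | inl y => exact congrArg Sum.inl (le_antisymm hab hba)
      | inr C => exact False.elim hba
    | inr C =>
      cases b with
      | inl y => exact False.elim hab
      | inr D => exact congrArg Sum.inr hab

/-- Scott-open subsets: upward closed and inaccessible by directed joins. -/
def ScottOpen {W : Type*} [Preorder W] (U : Set W) : Prop :=
  (∀ ⦃x y⦄, x ∈ U → x ≤ y → y ∈ U) ∧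
  ∀ D : Set W, D.Nonempty → DirectedOn (· ≤ ·) D → ∀ s : W, IsLUB D s → s ∈ U →
    (D ∩ U).Nonempty

/-- Scott-closed subsets. -/
def ScottClosed {W : Type*} [Preorder W] (C : Set W) : Prop := ScottOpen Cᶜ

end OrderTheory

section Valuation

variable {W : Type*}

/-- A valuation on a collection `Op` of open sets: strict, monotone and modular. -/
def IsValuationOn (Op : Set (Set W)) (μ : Set W → ℝ≥0∞) : Prop :=
  μ ∅ = 0 ∧
  (∀ U ∈ Op, ∀ V ∈ Op, U ⊆ V → μ U ≤ μ V) ∧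
  (∀ U ∈ Op, ∀ V ∈ Op, μ U + μ V = μ (U ∪ V) + μ (U ∩ V))

/-- Scott continuity of a valuation: it commutes with unions of directed families of opens. -/
def IsScottContinuousOn (Op : Set (Set W)) (μ : Set W → ℝ≥0∞) : Prop :=
  ∀ 𝒟 : Set (Set W), 𝒟.Nonempty → (∀ U ∈ 𝒟, U ∈ Op) → DirectedOn (· ⊆ ·) 𝒟 →
    μ (⋃₀ 𝒟) = ⨆ U ∈ 𝒟, μ U

/-- Local finiteness: every point has a finitely valued open neighbourhood. -/
def IsLocallyFiniteOn (Op : Set (Set W)) (μ : Set W → ℝ≥0∞) : Prop :=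
  ∀ x : W, ∃ U ∈ Op, x ∈ U ∧ μ U < ⊤

/-- The open sets of the Alexandroff topology of a preorder: the upward-closed sets. -/
def UpClosedSets (W : Type*) [Preorder W] : Set (Set W) :=
  {U | ∀ ⦃x y⦄, x ∈ U → x ≤ y → y ∈ U}

/-- The Scott-open subsets of a preorder. -/
def ScottOpens (W : Type*) [Preorder W] : Set (Set W) := {U | ScottOpen U}

end Valuation

/-- The separation closure `U* = {x ∈ U | cl {x} ∩ U = {x}}` of a subset of a
topological space. -/
def sepClosure {W : Type*} [TopologicalSpace W] (U : Set W) : Set W :=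
  {x ∈ U | closure {x} ∩ U = {x}}

/-! ## Fully probabilistic transition systems -/

section Prob

variable {A X : Type*}

/-- A fully probabilistic transition system. -/
structure FPTS (A X : Type*) where
  P : X → Option A → X → ℝ≥0∞
  le_one : ∀ x a y, P x a y ≤ 1
  finite_support : ∀ x : X, {q : Option A × X | 0 < P x q.1 q.2}.Finite
  total : ∀ x : X,
    (∑' q : Option A × X, P x q.1 q.2) = 0 ∨ (∑' q : Option A × X, P x q.1 q.2) = 1

/-- `p` is an execution from `x`. -/
def IsExec (S : FPTS A X) (x : X) (p : Path A X) : Prop :=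
  p.start = x ∧
  ∀ (σ : Word A) (a : Option A) (h : σ ++ [a] <+: p.word),
    0 < S.P (p.fn ⟨σ, (Path.prefixSnoc σ a).trans h⟩) a (p.fn ⟨σ ++ [a], h⟩)

/-- The weight function `μ_P` on paths: the product of the transition probabilities along an
execution, and `0` on paths that are not executions. -/
noncomputable def pathWeight (S : FPTS A X) (p : Path A X) : ℝ≥0∞ :=
  if ∃ x : X, IsExec S x p then
    ∏ i : Fin p.word.length,
      S.P (p.fn ⟨p.word.take i.1, List.take_prefix _ _⟩)
          (p.word.get i)
          (p.fn ⟨p.word.take (i.1 + 1), List.take_prefix _ _⟩)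
  else 0

/-- `x →_L Y`: executions from `x` with trace in `L`, last state in `Y`, and no strict prefix
witnessing the same. -/
def stepSet (S : FPTS A X) (x : X) (L : Set (Word A)) (Y : Set X) : Set (Path A X) :=
  {p | IsExec S x p ∧ p.trace ∈ L ∧ p.last ∈ Y ∧
       ∀ q : Path A X, q.lt p → q.trace ∈ L → q.last ∉ Y}

/-- `x ⇒_L Y`: paths starting in `x` with trace in `L` and last state in `Y`. -/
def reachSet (x : X) (L : Set (Word A)) (Y : Set X) : Set (Path A X) :=
  {p | p.start = x ∧ p.trace ∈ L ∧ p.last ∈ Y}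

/-- The separation closure `U*` of a set of paths (w.r.t. the prefix order). -/
def sepMin (U : Set (Path A X)) : Set (Path A X) :=
  {p ∈ U | ∀ q ∈ U, q.le p → q = p}

/-- The upward-closed sets of paths: the opens of the Alexandroff topology on `Path(X)`. -/
def pathUpSets (A X : Type*) : Set (Set (Path A X)) :=
  {U | ∀ p ∈ U, ∀ q : Path A X, p.le q → q ∈ U}

end Prob

/-! ## Labelled transition systems -/

section LTS

variable {A X : Type}

/-- `p` is an execution of the labelled transition system `Tr` from `x`. -/
def IsExecLTS (Tr : X → Option A → X → Prop) (x : X) (p : Path A X) : Prop :=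
  p.start = x ∧
  ∀ (σ : Word A) (a : Option A) (h : σ ++ [a] <+: p.word),
    Tr (p.fn ⟨σ, (Path.prefixSnoc σ a).trans h⟩) a (p.fn ⟨σ ++ [a], h⟩)

/-- Branching bisimulation. -/
def IsBranchingBisim (Tr : X → Option A → X → Prop) (R : X → X → Prop) : Prop :=
  Symmetric R ∧
  ∀ (x x' y : X) (a : Option A), Tr x a x' → R x y →
    (a = none ∧ R x' y) ∨
    ∃ y' y'' : X, Relation.ReflTransGen (fun u v => Tr u none v) y y' ∧
      Tr y' a y'' ∧ R x y' ∧ R x' y''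

/-- Two states are branching bisimilar if some branching bisimulation relates them. -/
def BranchingBisimilar (Tr : X → Option A → X → Prop) (x x' : X) : Prop :=
  ∃ R : X → X → Prop, IsBranchingBisim Tr R ∧ R x x'

/-- The path-based coalgebra `α : X → P(Path_∼ X)` of a labelled transition system: the
stutter classes of executions from `x` with trace in `τ*a` (for some `a ∈ A`) or in `τ*`. -/
def ltsAlpha (Tr : X → Option A → X → Prop) (x : X) : Set (PathQuot A X) :=
  {c | ∃ p : Path A X, IsExecLTS Tr x p ∧
    ((∃ (a : A) (n : ℕ), p.word = List.replicate n none ++ [some a]) ∨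
     (∃ n : ℕ, p.word = List.replicate n (none : Option A))) ∧
    c = PathQuot.mk p}

end LTS

/-! ## Auxiliary material for Statement 17 -/

section Stmt17Aux

variable {A X : Type*}

theorem fn_congr (p : Path A X) {σ σ' : Word A} (h : σ <+: p.word) (h' : σ' <+: p.word)
    (e : σ = σ') : p.fn ⟨σ, h⟩ = p.fn ⟨σ', h'⟩ := by subst e; rfl

theorem path_eq_of_le_len {p q : Path A X} (h : p.le q) (hl : q.word.length ≤ p.word.length) :
    q = p := by
  obtain ⟨hw, he⟩ := h
  have hww : p.word = q.word := hw.eq_of_length_le hl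
  obtain ⟨w, f⟩ := p
  obtain ⟨w', f'⟩ := q
  simp only at hww
  subst hww
  simp only [Path.mk.injEq, heq_eq_eq, true_and]
  funext σ
  obtain ⟨σ, hσ⟩ := σ
  exact he σ hσ

theorem exec_of_le {S : FPTS A X} {x : X} {p q : Path A X} (hq : IsExec S x q) (h : p.le q) :
    IsExec S x p := by
  obtain ⟨hw, he⟩ := h
  constructor
  · rw [← hq.1]
    exact (he [] (Path.nilPrefix _)).symm
  · intro σ a hσ
    have h1 := hq.2 σ a (hσ.trans hw)
    have e1 : q.fn ⟨σ, ((Path.prefixSnoc σ a).trans hσ).trans hw⟩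
        = p.fn ⟨σ, (Path.prefixSnoc σ a).trans hσ⟩ := he _ _
    have e2 : q.fn ⟨σ ++ [a], hσ.trans hw⟩ = p.fn ⟨σ ++ [a], hσ⟩ := he _ _
    rw [← e1, ← e2]
    exact h1

/-- Extending a path by a single step. -/
noncomputable def snocPath (p : Path A X) (a : Option A) (x : X) : Path A X where
  word := p.word ++ [a]
  fn := fun σ => if h : σ.1 <+: p.word then p.fn ⟨σ.1, h⟩ else x

theorem snocPath_word (p : Path A X) (a : Option A) (x : X) :
    (snocPath p a x).word = p.word ++ [a] := rfl

theorem snoc_fn_of_prefix (p : Path A X) (a : Option A) (x : X) {σ : Word A}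
    (h : σ <+: (snocPath p a x).word) (h' : σ <+: p.word) :
    (snocPath p a x).fn ⟨σ, h⟩ = p.fn ⟨σ, h'⟩ := dif_pos h'

theorem snoc_fn_last (p : Path A X) (a : Option A) (x : X) {σ : Word A}
    (h : σ <+: (snocPath p a x).word) (h' : σ = p.word ++ [a]) :
    (snocPath p a x).fn ⟨σ, h⟩ = x := by
  subst h'
  refine dif_neg fun hp => ?_
  have := hp.length_le
  simp at this

theorem le_snoc (p : Path A X) (a : Option A) (x : X) : p.le (snocPath p a x) :=
  ⟨⟨[a], rfl⟩, fun σ hσ => snoc_fn_of_prefix p a x _ hσ⟩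

/-- The `i`-th factor of the weight of a path. -/
noncomputable def Gfac (S : FPTS A X) (p : Path A X) (i : ℕ) : ℝ≥0∞ :=
  S.P (p.fn ⟨p.word.take i, List.take_prefix _ _⟩) (p.word.getD i none)
      (p.fn ⟨p.word.take (i + 1), List.take_prefix _ _⟩)

theorem pathWeight_eq (S : FPTS A X) (p : Path A X) (h : ∃ x, IsExec S x p) :
    pathWeight S p = ∏ i ∈ Finset.range p.word.length, Gfac S p i := by
  rw [pathWeight, if_pos h, ← Fin.prod_univ_eq_prod_range (Gfac S p)]
  refine Finset.prod_congr rfl fun i _ => ?_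
  simp only [Gfac]
  congr 2
  simp [List.getD_eq_getElem _ _ i.isLt]

theorem Gfac_snoc_eq (S : FPTS A X) (p : Path A X) (a : Option A) (x : X) {i : ℕ}
    (hi : i < p.word.length) : Gfac S (snocPath p a x) i = Gfac S p i := by
  have ht : ∀ j, j ≤ p.word.length → ((snocPath p a x).word.take j : Word A) = p.word.take j :=
    fun j hj => List.take_append_of_le_length hj
  have h1 : ((snocPath p a x).word.take i : Word A) <+: p.word := by
    rw [ht i hi.le]; exact List.take_prefix _ _
  have h2 : ((snocPath p a x).word.take (i + 1) : Word A) <+: p.word := by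
    rw [ht (i + 1) hi]; exact List.take_prefix _ _
  have e1 := (snoc_fn_of_prefix p a x (List.take_prefix _ _) h1).trans
    (fn_congr p h1 (List.take_prefix _ _) (ht i hi.le))
  have e2 := (snoc_fn_of_prefix p a x (List.take_prefix _ _) h2).trans
    (fn_congr p h2 (List.take_prefix _ _) (ht (i + 1) hi))
  have e3 : ((snocPath p a x).word.getD i none) = p.word.getD i none :=
    List.getD_append _ _ _ _ hi
  rw [Gfac, e1, e2, e3, Gfac]

theorem Gfac_snoc_last (S : FPTS A X) (p : Path A X) (a : Option A) (x : X) :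
    Gfac S (snocPath p a x) p.word.length = S.P p.last a x := by
  have ht : ((snocPath p a x).word.take p.word.length : Word A) = p.word := by
    rw [snocPath_word, List.take_append_of_le_length le_rfl, List.take_length]
  have h1 : ((snocPath p a x).word.take p.word.length : Word A) <+: p.word := by
    rw [ht]
  have e1 := (snoc_fn_of_prefix p a x (List.take_prefix _ _) h1).trans
    (fn_congr p h1 (List.prefix_refl _) ht)
  have e3 : ((snocPath p a x).word.take (p.word.length + 1) : Word A) = p.word ++ [a] := by
    rw [snocPath_word, List.take_of_length_le (by simp)]
  have e2 := snoc_fn_last p a x (List.take_prefix _ _) e3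
  have e4 : ((snocPath p a x).word.getD p.word.length none) = a := by
    rw [snocPath_word, List.getD_eq_getElem _ _ (by simp)]
    simp
  rw [Gfac, e1, e2, e4]
  rfl

theorem pathWeight_snoc_le (S : FPTS A X) (p : Path A X) (a : Option A) (x : X) :
    pathWeight S (snocPath p a x) ≤ pathWeight S p * S.P p.last a x := by
  by_cases hex : ∃ y, IsExec S y (snocPath p a x)
  · have hp : ∃ y, IsExec S y p := hex.imp fun y hy => exec_of_le hy (le_snoc p a x)
    rw [pathWeight_eq S _ hex, pathWeight_eq S p hp]
    have hlen : (snocPath p a x).word.length = p.word.length + 1 := by simp [snocPath_word]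
    rw [hlen, Finset.prod_range_succ]
    refine le_of_eq ?_
    congr 1
    · exact Finset.prod_congr rfl fun i hi =>
        Gfac_snoc_eq S p a x (Finset.mem_range.mp hi)
    · exact Gfac_snoc_last S p a x
  · rw [pathWeight, if_neg hex]
    exact zero_le

theorem sum_snoc_le (S : FPTS A X) (p : Path A X) (K : Finset (Option A × X)) :
    ∑ k ∈ K, pathWeight S (snocPath p k.1 k.2) ≤ pathWeight S p := by
  by_cases hex : ∃ y, IsExec S y p
  · calc ∑ k ∈ K, pathWeight S (snocPath p k.1 k.2)
        ≤ ∑ k ∈ K, pathWeight S p * S.P p.last k.1 k.2 :=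
          Finset.sum_le_sum fun k _ => pathWeight_snoc_le S p k.1 k.2
      _ = pathWeight S p * ∑ k ∈ K, S.P p.last k.1 k.2 := by rw [Finset.mul_sum]
      _ ≤ pathWeight S p * 1 := by
          gcongr
          refine le_trans (ENNReal.sum_le_tsum K) ?_
          rcases S.total p.last with h | h
          · rw [h]; exact zero_le_one
          · rw [h]
      _ = pathWeight S p := mul_one _
  · have h0 : pathWeight S p = 0 := if_neg hex
    have hz : ∀ k ∈ K, pathWeight S (snocPath p k.1 k.2) = 0 := by
      intro k _
      rw [pathWeight, if_neg]
      rintro ⟨y, hy⟩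
      exact hex ⟨y, exec_of_le hy (le_snoc p k.1 k.2)⟩
    rw [Finset.sum_eq_zero hz, h0]

theorem snoc_le_of_key {p q : Path A X} (hle : p.le q) (hs : p.word.length < q.word.length) :
    (snocPath p (q.word.getD p.word.length none)
      (q.fn ⟨q.word.take (p.word.length + 1), List.take_prefix _ _⟩)).le q := by
  set n := p.word.length with hn
  have hpw : p.word = q.word.take n := by
    rw [hn]; exact List.prefix_iff_eq_take.mp hle.1
  have hword : p.word ++ [q.word.getD n none] = q.word.take (n + 1) := by
    rw [List.take_succ, ← hpw, List.getElem?_eq_getElem hs,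
      List.getD_eq_getElem _ _ hs]
    rfl
  have hpre : (snocPath p (q.word.getD n none)
      (q.fn ⟨q.word.take (n + 1), List.take_prefix _ _⟩)).word <+: q.word := by
    rw [snocPath_word, hword]; exact List.take_prefix _ _
  refine ⟨hpre, fun σ hσ => ?_⟩
  rw [snocPath_word] at hσ
  rcases List.prefix_concat_iff.mp hσ with h | h
  · rw [snoc_fn_last p _ _ _ h]
    refine fn_congr q _ _ ?_
    rw [h, hword]
  · rw [snoc_fn_of_prefix p _ _ _ h]
    exact hle.2 σ h

theorem key_lemma (S : FPTS A X) : ∀ N : ℕ, ∀ (p : Path A X) (F : Finset (Path A X)),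
    (∀ q ∈ F, p.le q) → (∀ q ∈ F, ∀ q' ∈ F, q.le q' → q = q') →
    (∀ q ∈ F, q.word.length ≤ p.word.length + N) →
    ∑ q ∈ F, pathWeight S q ≤ pathWeight S p := by
  intro N
  induction N with
  | zero =>
    intro p F hlb hsep hlen
    have hall : ∀ q ∈ F, q = p := fun q hq =>
      path_eq_of_le_len (hlb q hq) (by simpa using hlen q hq)
    rcases F.eq_empty_or_nonempty with rfl | ⟨q0, hq0⟩
    · simp
    · have hF : F = {p} := Finset.eq_singleton_iff_unique_mem.mpr
        ⟨hall q0 hq0 ▸ hq0, hall⟩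
      rw [hF, Finset.sum_singleton]
  | succ N ih =>
    intro p F hlb hsep hlen
    by_cases hpF : p ∈ F
    · have hF : F = {p} := Finset.eq_singleton_iff_unique_mem.mpr
        ⟨hpF, fun q hq => (hsep p hpF q hq (hlb q hq)).symm⟩
      rw [hF, Finset.sum_singleton]
    · classical
      have hstrict : ∀ q ∈ F, p.word.length < q.word.length := by
        intro q hq
        by_contra hc
        exact hpF ((path_eq_of_le_len (hlb q hq) (not_lt.mp hc)) ▸ hq)
      set n := p.word.length with hn
      set key : Path A X → Option A × X := fun q =>
        (q.word.getD n none, q.fn ⟨q.word.take (n + 1), List.take_prefix _ _⟩) with hkey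
      rw [← Finset.sum_fiberwise_of_maps_to
        (fun q hq => Finset.mem_image_of_mem key hq) (pathWeight S)]
      calc ∑ k ∈ F.image key, ∑ q ∈ F.filter (fun q => key q = k), pathWeight S q
          ≤ ∑ k ∈ F.image key, pathWeight S (snocPath p k.1 k.2) := by
            refine Finset.sum_le_sum fun k _ => ?_
            refine ih (snocPath p k.1 k.2) _ ?_ ?_ ?_
            · intro q hq
              rw [Finset.mem_filter] at hq
              obtain rfl := hq.2
              exact snoc_le_of_key (hlb q hq.1) (hstrict q hq.1)
            · intro q hq q' hq' h
              rw [Finset.mem_filter] at hq hq'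
              exact hsep q hq.1 q' hq'.1 h
            · intro q hq
              rw [Finset.mem_filter] at hq
              have h1 := hlen q hq.1
              have h2 : (snocPath p k.1 k.2).word.length = n + 1 := by
                simp [snocPath_word, hn]
              omega
        _ ≤ pathWeight S p := sum_snoc_le S p _
end Stmt17Aux

theorem stmt17 {A X : Type*} [Countable A] [Countable X] (S : FPTS A X)
    (p : Path A X) (U : Set (Path A X))
    (hsep : ∀ q ∈ U, ∀ q' ∈ U, q.le q' → q = q')
    (hlb : ∀ q ∈ U, p.le q) :
    ∑' q : U, pathWeight S q.1 ≤ pathWeight S p := by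
  rw [ENNReal.tsum_eq_iSup_sum]
  refine iSup_le fun s => ?_
  classical
  have himg : ∑ q ∈ s.image (Subtype.val), pathWeight S q = ∑ q ∈ s, pathWeight S q.1 :=
    Finset.sum_image (fun x _ y _ h => Subtype.ext h)
  rw [← himg]
  refine key_lemma S (s.sup fun q => q.1.word.length) p (s.image Subtype.val) ?_ ?_ ?_
  · intro q hq
    obtain ⟨a, ha, rfl⟩ := Finset.mem_image.mp hq
    exact hlb a.1 a.2
  · intro q hq q' hq' h
    obtain ⟨a, ha, rfl⟩ := Finset.mem_image.mp hq
    obtain ⟨b, hb, rfl⟩ := Finset.mem_image.mp hq'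
    exact hsep a.1 a.2 b.1 b.2 h
  · intro q hq
    obtain ⟨a, ha, rfl⟩ := Finset.mem_image.mp hq
    exact le_trans (Finset.le_sup (f := fun q => q.1.word.length) ha) (Nat.le_add_left _ _)


end PaperBB
end

section
/- Let (X, A_τ, P) be a fully probabilistic transition system. The function μ̃_P, defined on upward-closed subsets U of Path(X) (the open sets of the Alexandroff topology on the path order) by μ̃_P(U) = Σ_{p ∈ U*} μ_P(p), is a locally finite and Scott-continuous valuation: μ̃_P(∅) = 0; U ⊆ V implies μ̃_P(U) ≤ μ̃_P(V); μ̃_P(U) + μ̃_P(V) = μ̃_P(U∪V) + μ̃_P(U∩V); μ̃_P(⋃_i U_i) = sup_i μ̃_P(U_i) for every family of open sets directed under inclusion; and every path has an open neighbourhood of finite μ̃_P-value. -/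
open scoped Classical ENNReal

namespace PaperBB

/-! ## Auxiliary development for Statement 18 -/

section Aux18

variable {A X : Type*}

namespace Path

theorem ext' {p q : Path A X} (hw : p.word = q.word)
    (hf : ∀ (σ : Word A) (h1 : σ <+: p.word) (h2 : σ <+: q.word),
      p.fn ⟨σ, h1⟩ = q.fn ⟨σ, h2⟩) : p = q := by
  cases p with
  | mk w f =>
    cases q with
    | mk w' f' =>
      dsimp at hw
      subst hw
      have : f = f' := by
        funext σ
        exact hf σ.1 σ.2 σ.2
      rw [this]

theorem fn_congr (p : Path A X) {σ σ' : Word A} (h : σ <+: p.word)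
    (e : σ = σ') : p.fn ⟨σ, h⟩ = p.fn ⟨σ', e ▸ h⟩ := by subst e; rfl

theorem le_refl' (p : Path A X) : p.le p := ⟨List.prefix_refl _, fun _ _ => rfl⟩

theorem le_trans' {p q r : Path A X} (h1 : p.le q) (h2 : q.le r) : p.le r := by
  obtain ⟨hw1, hf1⟩ := h1
  obtain ⟨hw2, hf2⟩ := h2
  exact ⟨hw1.trans hw2, fun σ hσ => (hf2 σ (hσ.trans hw1)).trans (hf1 σ hσ)⟩

theorem le_antisymm' {p q : Path A X} (h1 : p.le q) (h2 : q.le p) : p = q := by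
  obtain ⟨hw1, hf1⟩ := h1
  obtain ⟨hw2, hf2⟩ := h2
  have hw : p.word = q.word := hw1.eq_of_length_le hw2.length_le
  exact ext' hw (fun σ ha hb => (hf1 σ ha).symm)

/-- Restriction of a path to the first `k` letters of its word. -/
def take (p : Path A X) (k : ℕ) : Path A X :=
  ⟨p.word.take k, fun σ => p.fn ⟨σ.1, σ.2.trans (List.take_prefix _ _)⟩⟩

theorem take_le (p : Path A X) (k : ℕ) : (p.take k).le p :=
  ⟨List.take_prefix _ _, fun _ _ => rfl⟩

@[simp] theorem take_word (p : Path A X) (k : ℕ) : (p.take k).word = p.word.take k := rfl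

theorem take_length' (p : Path A X) : p.take p.word.length = p := by
  refine ext' List.take_length (fun σ h1 h2 => ?_)
  rfl

theorem take_take' (p : Path A X) {k m : ℕ} (h : k ≤ m) :
    (p.take m).take k = p.take k := by
  refine ext' ?_ (fun σ h1 h2 => rfl)
  simp [List.take_take, Nat.min_eq_left h]

theorem take_le_take (p : Path A X) {k m : ℕ} (h : k ≤ m) :
    (p.take k).le (p.take m) := take_take' p h ▸ take_le (p.take m) k

theorem eq_take_of_le {p q : Path A X} (h : q.le p) : q = p.take q.word.length := by
  obtain ⟨hw, hf⟩ := h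
  refine ext' (List.prefix_iff_eq_take.mp hw) (fun σ h1 h2 => ?_)
  exact (hf σ h1).symm

end Path

end Aux18
section Aux18b

variable {A X : Type*}

namespace Path

/-- The sequence of steps `(aᵢ, xᵢ₊₁)` of a path. -/
def steps (p : Path A X) : List (Option A × X) :=
  List.ofFn (fun i : Fin p.word.length =>
    (p.word.get i, p.fn ⟨p.word.take (i.1 + 1), List.take_prefix _ _⟩))

@[simp] theorem steps_length (p : Path A X) : p.steps.length = p.word.length := by
  simp [steps]

theorem steps_get (p : Path A X) (i : ℕ) (hi : i < p.steps.length) :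
    p.steps[i] =
      (p.word[i]'(by simpa using hi),
       p.fn ⟨p.word.take (i + 1), List.take_prefix _ _⟩) := by
  simp [steps]

/-- The state reached after `k` steps when starting in `x` and performing the steps `l`. -/
def stateAt (x : X) (l : List (Option A × X)) : ℕ → X
  | 0 => x
  | k + 1 => (l.map Prod.snd).getD k x

theorem stateAt_cons (x : X) (s : Option A × X) (l : List (Option A × X)) (k : ℕ)
    (hk : k ≤ l.length) : stateAt x (s :: l) (k + 1) = stateAt s.2 l k := by
  cases k with
  | zero => simp [stateAt]
  | succ k =>
    have hk' : k < (l.map Prod.snd).length := by simpa using hk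
    simp only [stateAt, List.map_cons, List.getD_cons_succ]
    rw [List.getD_eq_getElem _ _ hk', List.getD_eq_getElem _ _ hk']

theorem stateAt_prefix {x : X} {l l' : List (Option A × X)} (h : l <+: l') {k : ℕ}
    (hk : k ≤ l.length) : stateAt x l k = stateAt x l' k := by
  cases k with
  | zero => rfl
  | succ k =>
    have h2 : l.map Prod.snd <+: l'.map Prod.snd := h.map _
    have hk1 : k < (l.map Prod.snd).length := by simpa using hk
    have hk2 : k < (l'.map Prod.snd).length :=
      lt_of_lt_of_le hk1 h2.length_le
    simp only [stateAt]
    rw [List.getD_eq_getElem _ _ hk1, List.getD_eq_getElem _ _ hk2]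
    exact h2.getElem hk1

theorem fn_take_eq_stateAt (p : Path A X) (k : ℕ) (hk : k ≤ p.word.length) :
    p.fn ⟨p.word.take k, List.take_prefix _ _⟩ = stateAt p.start p.steps k := by
  cases k with
  | zero =>
    rw [p.fn_congr (List.take_prefix 0 p.word) (List.take_zero : p.word.take 0 = [])]
    rfl
  | succ k =>
    have hk' : k < p.steps.length := by simpa using hk
    simp only [stateAt]
    rw [List.getD_eq_getElem _ _ (by simpa using hk : k < (p.steps.map Prod.snd).length)]
    simp only [List.getElem_map]
    rw [p.steps_get k hk']

theorem word_eq_map_steps (p : Path A X) : p.word = p.steps.map Prod.fst := by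
  refine List.ext_getElem (by simp) (fun i h1 h2 => ?_)
  rw [List.getElem_map, p.steps_get i (by simpa using h1)]

/-- `p ⪯ q` iff they have the same start and the steps of `p` are a prefix of those of `q`. -/
theorem le_iff_steps {p q : Path A X} :
    p.le q ↔ p.start = q.start ∧ p.steps <+: q.steps := by
  constructor
  · rintro ⟨hw, hf⟩
    constructor
    · exact (hf [] (Path.nilPrefix _)).symm
    · have hlen : p.word.length ≤ q.word.length := hw.length_le
      have : p.steps = q.steps.take p.steps.length := by
        refine List.ext_getElem (by simp [Nat.min_eq_left, hlen]) (fun i h1 h2 => ?_)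
        have hi : i < p.steps.length := h1
        have hiw : i < p.word.length := by simpa using hi
        have hiq : i < q.steps.length := by
          simpa using lt_of_lt_of_le hiw hlen
        rw [List.getElem_take]
        rw [p.steps_get i hi, q.steps_get i hiq]
        have hword : p.word[i]'hiw = q.word[i]'(by simpa using hiq) :=
          hw.getElem hiw
        have htake : q.word.take (i+1) = p.word.take (i+1) := by
          rw [List.prefix_iff_eq_take.mp hw, List.take_take,
            Nat.min_eq_left (by omega)]
        refine Prod.ext hword ?_
        dsimp
        rw [q.fn_congr (List.take_prefix _ _) htake]
        exact (hf _ (List.take_prefix _ _)).symm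
      rw [this]
      exact List.take_prefix _ _
  · rintro ⟨hs, hst⟩
    have hw : p.word <+: q.word := by
      rw [p.word_eq_map_steps, q.word_eq_map_steps]
      exact hst.map _
    refine ⟨hw, fun σ hσ => ?_⟩
    have e1 : σ = p.word.take σ.length := List.prefix_iff_eq_take.mp hσ
    have e2 : σ = q.word.take σ.length := List.prefix_iff_eq_take.mp (hσ.trans hw)
    have hlen : σ.length ≤ p.word.length := hσ.length_le
    rw [q.fn_congr _ e2, p.fn_congr _ e1,
      p.fn_take_eq_stateAt σ.length hlen,
      q.fn_take_eq_stateAt σ.length (le_trans hlen hw.length_le), ← hs]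
    exact (stateAt_prefix hst (by simpa using hlen)).symm

theorem eq_of_start_steps {p q : Path A X} (hs : p.start = q.start)
    (hst : p.steps = q.steps) : p = q :=
  le_antisymm' (le_iff_steps.mpr ⟨hs, hst ▸ List.prefix_refl _⟩)
    (le_iff_steps.mpr ⟨hs.symm, hst ▸ List.prefix_refl _⟩)

end Path

end Aux18b
section Aux18c

variable {A X : Type*}
open Path

/-- Weight of a list of steps starting in `x`. -/
noncomputable def lweight (S : FPTS A X) (x : X) : List (Option A × X) → ℝ≥0∞
  | [] => 1
  | s :: l => S.P x s.1 s.2 * lweight S s.2 l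

@[simp] theorem lweight_nil (S : FPTS A X) (x : X) : lweight S x [] = 1 := rfl

theorem lweight_cons (S : FPTS A X) (x : X) (s : Option A × X) (l : List (Option A × X)) :
    lweight S x (s :: l) = S.P x s.1 s.2 * lweight S s.2 l := rfl

theorem lweight_append (S : FPTS A X) (x : X) (l m : List (Option A × X)) :
    lweight S x (l ++ m) = lweight S x l * lweight S (stateAt x l l.length) m := by
  induction l generalizing x with
  | nil => simp [stateAt]
  | cons s l ih =>
    rw [List.cons_append, lweight_cons, lweight_cons, ih, List.length_cons,
      stateAt_cons x s l l.length le_rfl, mul_assoc]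

theorem lweight_eq_prod (S : FPTS A X) (x : X) (l : List (Option A × X)) :
    lweight S x l = ∏ i ∈ Finset.range l.length,
      S.P (stateAt x l i) (l.getD i (none, x)).1 (l.getD i (none, x)).2 := by
  induction l generalizing x with
  | nil => simp
  | cons s l ih =>
    rw [lweight_cons, ih, List.length_cons, Finset.prod_range_succ']
    have h0 : ∀ y : X, ((s :: l).getD 0 (none, y)) = s := fun _ => rfl
    rw [h0]
    have : ∀ i ∈ Finset.range l.length,
        S.P (stateAt x (s :: l) (i + 1)) ((s :: l).getD (i+1) (none, x)).1
          ((s :: l).getD (i+1) (none, x)).2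
        = S.P (stateAt s.2 l i) (l.getD i (none, s.2)).1 (l.getD i (none, s.2)).2 := by
      intro i hi
      rw [Finset.mem_range] at hi
      rw [stateAt_cons x s l i (le_of_lt hi), List.getD_cons_succ,
        List.getD_eq_getElem _ _ hi, List.getD_eq_getElem _ _ hi]
    rw [Finset.prod_congr rfl this, mul_comm]
    rfl

theorem pathWeight_eq_prod (S : FPTS A X) (p : Path A X) :
    pathWeight S p = ∏ i : Fin p.word.length,
      S.P (p.fn ⟨p.word.take i.1, List.take_prefix _ _⟩)
          (p.word.get i)
          (p.fn ⟨p.word.take (i.1 + 1), List.take_prefix _ _⟩) := by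
  rw [pathWeight]
  split
  · rfl
  · next hne =>
    -- not an execution: some transition probability is zero, hence the product vanishes
    have hne' : ¬ IsExec S p.start p := fun h => hne ⟨p.start, h⟩
    unfold IsExec at hne'
    push_neg at hne'
    obtain ⟨σ, a, h, hP⟩ := hne' rfl
    rw [le_zero_iff] at hP
    obtain ⟨t, ht⟩ := h
    have hlt : σ.length < p.word.length := by
      rw [← ht]; simp
    have e2 : p.word.take (σ.length + 1) = σ ++ [a] := by
      rw [← ht]; exact List.take_left' (by simp)
    have e1 : p.word.take σ.length = σ := by
      rw [← ht, List.append_assoc]; exact List.take_left' rfl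
    have e3 : p.word.get ⟨σ.length, hlt⟩ = a := by
      have hts := List.take_succ (l := p.word) (i := σ.length)
      rw [e1, e2] at hts
      have : [a] = (p.word[σ.length]?).toList := List.append_cancel_left hts
      rw [List.getElem?_eq_getElem hlt] at this
      simpa using this.symm
    symm
    refine Finset.prod_eq_zero (Finset.mem_univ ⟨σ.length, hlt⟩) ?_
    rw [e3, p.fn_congr _ e1, p.fn_congr _ e2]
    exact hP

end Aux18c
section Aux18d

variable {A X : Type*}
open Path

theorem pathWeight_eq_lweight (S : FPTS A X) (p : Path A X) :
    pathWeight S p = lweight S p.start p.steps := by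
  rw [pathWeight_eq_prod, lweight_eq_prod]
  have hn : p.steps.length = p.word.length := p.steps_length
  rw [hn, ← Fin.prod_univ_eq_prod_range (fun i =>
    S.P (stateAt p.start p.steps i) ((p.steps.getD i (none, p.start)).1)
      ((p.steps.getD i (none, p.start)).2)) p.word.length]
  apply Finset.prod_congr rfl
  intro i _
  have hi : i.1 < p.steps.length := by rw [hn]; exact i.2
  rw [List.getD_eq_getElem _ _ hi, p.steps_get i.1 hi,
    ← p.fn_take_eq_stateAt i.1 (le_of_lt i.2)]
  rfl

theorem pathWeight_le_one (S : FPTS A X) (p : Path A X) : pathWeight S p ≤ 1 := by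
  rw [pathWeight]
  split
  · exact Finset.prod_le_one (fun _ _ => zero_le) (fun i _ => S.le_one _ _ _)
  · exact zero_le_one

theorem sum_P_le_one (S : FPTS A X) (x : X) (E : Finset (Option A × X)) :
    ∑ q ∈ E, S.P x q.1 q.2 ≤ 1 := by
  refine le_trans (ENNReal.sum_le_tsum E) ?_
  rcases S.total x with h | h <;> simp [h]

/-- Key lemma: the weights of a finite antichain of step lists sum to at most `1`. -/
theorem antichain_sum (S : FPTS A X) :
    ∀ (N : ℕ) (x : X) (T : Finset (List (Option A × X))),
      (∀ l ∈ T, l.length ≤ N) →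
      (∀ l ∈ T, ∀ m ∈ T, l <+: m → l = m) →
      ∑ l ∈ T, lweight S x l ≤ 1 := by
  intro N
  induction N with
  | zero =>
    intro x T hlen _
    have hsub : T ⊆ {[]} := by
      intro l hl
      have : l.length = 0 := Nat.le_zero.mp (hlen l hl)
      simp [List.length_eq_zero_iff.mp this]
    calc ∑ l ∈ T, lweight S x l ≤ ∑ l ∈ ({[]} : Finset (List (Option A × X))), lweight S x l :=
          Finset.sum_le_sum_of_subset hsub
      _ = 1 := by simp
  | succ N ih =>
    intro x T hlen hanti
    by_cases hnil : [] ∈ T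
    · have hsub : T ⊆ {[]} := by
        intro l hl
        exact Finset.mem_singleton.mpr (hanti [] hnil l hl List.nil_prefix).symm
      calc ∑ l ∈ T, lweight S x l ≤ ∑ l ∈ ({[]} : Finset (List (Option A × X))), lweight S x l :=
            Finset.sum_le_sum_of_subset hsub
        _ = 1 := by simp
    · set g : List (Option A × X) → Option A × X := fun l => l.getD 0 (none, x) with hg
      have hmaps : ∀ l ∈ T, g l ∈ T.image g := fun l hl => Finset.mem_image_of_mem g hl
      rw [← Finset.sum_fiberwise_of_maps_to hmaps (lweight S x)]
      have hfib : ∀ s ∈ T.image g,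
          ∑ l ∈ T.filter (fun l => g l = s), lweight S x l ≤ S.P x s.1 s.2 := by
        intro s _
        set F := T.filter (fun l => g l = s) with hF
        have hcons : ∀ l ∈ F, l = s :: l.tail := by
          intro l hl
          rw [hF, Finset.mem_filter] at hl
          obtain ⟨hlT, hgl⟩ := hl
          cases l with
          | nil => exact absurd hlT hnil
          | cons a t =>
            rw [← hgl]
            simp [hg]
        have hinj : ∀ l1 ∈ F, ∀ l2 ∈ F, l1.tail = l2.tail → l1 = l2 := by
          intro l1 h1 l2 h2 ht
          rw [hcons l1 h1, hcons l2 h2, ht]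
        calc ∑ l ∈ F, lweight S x l
            = ∑ l ∈ F, S.P x s.1 s.2 * lweight S s.2 l.tail := by
              refine Finset.sum_congr rfl (fun l hl => ?_)
              conv_lhs => rw [hcons l hl]
              rfl
          _ = S.P x s.1 s.2 * ∑ l ∈ F, lweight S s.2 l.tail := by rw [Finset.mul_sum]
          _ = S.P x s.1 s.2 * ∑ t ∈ F.image List.tail, lweight S s.2 t := by
              rw [Finset.sum_image hinj]
          _ ≤ S.P x s.1 s.2 * 1 := by
              refine mul_le_mul' le_rfl (ih s.2 (F.image List.tail) ?_ ?_)
              · intro t htm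
                obtain ⟨l, hl, rfl⟩ := Finset.mem_image.mp htm
                have : l.length ≤ N + 1 := hlen l (Finset.mem_filter.mp hl).1
                have := List.length_tail (l := l)
                omega
              · intro t1 h1 t2 h2 hpre
                obtain ⟨l1, hl1, rfl⟩ := Finset.mem_image.mp h1
                obtain ⟨l2, hl2, rfl⟩ := Finset.mem_image.mp h2
                have hl12 : l1 <+: l2 := by
                  rw [hcons l1 hl1, hcons l2 hl2]
                  exact List.cons_prefix_cons.mpr ⟨rfl, hpre⟩
                rw [hanti l1 (Finset.mem_filter.mp hl1).1 l2 (Finset.mem_filter.mp hl2).1 hl12]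
          _ = S.P x s.1 s.2 := mul_one _
      calc ∑ s ∈ T.image g, ∑ l ∈ T.filter (fun l => g l = s), lweight S x l
          ≤ ∑ s ∈ T.image g, S.P x s.1 s.2 := Finset.sum_le_sum hfib
        _ ≤ 1 := sum_P_le_one S x _

/-- Antichain lemma relative to a common root `r`. -/
theorem antichain_sum_root (S : FPTS A X) (x : X) (r : List (Option A × X))
    (T : Finset (List (Option A × X)))
    (hroot : ∀ l ∈ T, r <+: l)
    (hanti : ∀ l ∈ T, ∀ m ∈ T, l <+: m → l = m) :
    ∑ l ∈ T, lweight S x l ≤ lweight S x r := by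
  have hdec : ∀ l ∈ T, l = r ++ l.drop r.length := by
    intro l hl
    obtain ⟨t, rfl⟩ := hroot l hl
    rw [List.drop_left]
  have hinj : ∀ l1 ∈ T, ∀ l2 ∈ T, l1.drop r.length = l2.drop r.length → l1 = l2 := by
    intro l1 h1 l2 h2 h
    rw [hdec l1 h1, hdec l2 h2, h]
  calc ∑ l ∈ T, lweight S x l
      = ∑ l ∈ T, lweight S x r * lweight S (stateAt x r r.length) (l.drop r.length) := by
        refine Finset.sum_congr rfl (fun l hl => ?_)
        conv_lhs => rw [hdec l hl]
        exact lweight_append S x r _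
    _ = lweight S x r * ∑ t ∈ T.image (List.drop r.length), lweight S (stateAt x r r.length) t := by
        rw [Finset.mul_sum, Finset.sum_image hinj]
    _ ≤ lweight S x r * 1 := by
        refine mul_le_mul' le_rfl ?_
        refine antichain_sum S (T.sup List.length) (stateAt x r r.length) _ ?_ ?_
        · intro t htm
          obtain ⟨l, hl, rfl⟩ := Finset.mem_image.mp htm
          exact le_trans (List.length_drop ▸ Nat.sub_le _ _) (Finset.le_sup hl)
        · intro t1 h1 t2 h2 hpre
          obtain ⟨l1, hl1, rfl⟩ := Finset.mem_image.mp h1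
          obtain ⟨l2, hl2, rfl⟩ := Finset.mem_image.mp h2
          have hl12 : l1 <+: l2 := by
            rw [hdec l1 hl1, hdec l2 hl2]
            exact (List.prefix_append_right_inj r).mpr hpre
          rw [hanti l1 hl1 l2 hl2 hl12]
    _ = lweight S x r := mul_one _

end Aux18d
section Aux18e

variable {A X : Type*}
open Path

theorem union_mem_pathUpSets {U V : Set (Path A X)} (hU : U ∈ pathUpSets A X)
    (hV : V ∈ pathUpSets A X) : U ∪ V ∈ pathUpSets A X := by
  rintro p (hp | hp) q hq
  · exact Or.inl (hU p hp q hq)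
  · exact Or.inr (hV p hp q hq)

theorem inter_mem_pathUpSets {U V : Set (Path A X)} (hU : U ∈ pathUpSets A X)
    (hV : V ∈ pathUpSets A X) : U ∩ V ∈ pathUpSets A X := by
  rintro p ⟨h1, h2⟩ q hq
  exact ⟨hU p h1 q hq, hV p h2 q hq⟩

theorem sUnion_mem_pathUpSets {𝒟 : Set (Set (Path A X))} (h : ∀ U ∈ 𝒟, U ∈ pathUpSets A X) :
    ⋃₀ 𝒟 ∈ pathUpSets A X := by
  rintro p ⟨U, hU, hp⟩ q hq
  exact ⟨U, hU, h U hU p hp q hq⟩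

theorem exists_min {U : Set (Path A X)} (hU : U ∈ pathUpSets A X) {p : Path A X}
    (hp : p ∈ U) : ∃ q, q ∈ sepMin U ∧ q.le p ∧ ∀ r ∈ U, r.le p → q.le r := by
  have hex : ∃ k, p.take k ∈ U := ⟨p.word.length, by rwa [take_length']⟩
  have hkU : p.take (Nat.find hex) ∈ U := Nat.find_spec hex
  have hleast : ∀ r ∈ U, r.le p → (p.take (Nat.find hex)).le r := by
    intro r hr hrp
    have e := eq_take_of_le hrp
    have hk : Nat.find hex ≤ r.word.length := Nat.find_min' hex (by rw [← e]; exact hr)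
    rw [e]
    exact take_le_take p hk
  refine ⟨p.take (Nat.find hex), ⟨hkU, ?_⟩, take_le p _, hleast⟩
  intro r hr hrq
  exact le_antisymm' hrq (hleast r hr (le_trans' hrq (take_le p _)))

/-- The minimal restriction of `p` lying in the upward-closed set `W`. -/
noncomputable def minW {W : Set (Path A X)} (hW : W ∈ pathUpSets A X) (p : Path A X) :
    Path A X :=
  if hp : p ∈ W then (exists_min hW hp).choose else p

theorem minW_mem {W : Set (Path A X)} (hW : W ∈ pathUpSets A X) {p : Path A X}
    (hp : p ∈ W) : minW hW p ∈ sepMin W := by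
  rw [minW, dif_pos hp]; exact (exists_min hW hp).choose_spec.1

theorem minW_le {W : Set (Path A X)} (hW : W ∈ pathUpSets A X) {p : Path A X}
    (hp : p ∈ W) : (minW hW p).le p := by
  rw [minW, dif_pos hp]; exact (exists_min hW hp).choose_spec.2.1

theorem minW_least {W : Set (Path A X)} (hW : W ∈ pathUpSets A X) {p : Path A X}
    (hp : p ∈ W) : ∀ r ∈ W, r.le p → (minW hW p).le r := by
  rw [minW, dif_pos hp]; exact (exists_min hW hp).choose_spec.2.2

theorem minW_eq_self {W : Set (Path A X)} (hW : W ∈ pathUpSets A X) {p : Path A X}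
    (hp : p ∈ sepMin W) : minW hW p = p :=
  hp.2 (minW hW p) (minW_mem hW hp.1).1 (minW_le hW hp.1)

/-- The fiber over `q` of the map assigning to each minimal element of `T` its minimal
restriction in `W`. -/
def Fib {W : Set (Path A X)} (hW : W ∈ pathUpSets A X) (T : Set (Path A X))
    (q : Path A X) : Set (Path A X) :=
  {p | p ∈ sepMin T ∧ minW hW p = q}

theorem tsum_fiber {α β : Type*} (g : α → β) (f : α → ℝ≥0∞) :
    ∑' a, f a = ∑' b, ∑' a : {a // g a = b}, f a.1 := by
  rw [← (Equiv.sigmaFiberEquiv g).tsum_eq f, ENNReal.tsum_sigma']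
  rfl

/-- Decomposition of the sum over `sepMin T` according to minimal restrictions in `W ⊇ T`. -/
theorem mu_decomp (S : FPTS A X) {W : Set (Path A X)} (hW : W ∈ pathUpSets A X)
    {T : Set (Path A X)} (hTW : T ⊆ W) :
    ∑' p : sepMin T, pathWeight S p.1 =
      ∑' q : sepMin W, ∑' p : Fib hW T q.1, pathWeight S p.1 := by
  have hmem : ∀ p : sepMin T, minW hW p.1 ∈ sepMin W := fun p => minW_mem hW (hTW p.2.1)
  rw [tsum_fiber (fun p : sepMin T => (⟨minW hW p.1, hmem p⟩ : sepMin W))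
    (fun p => pathWeight S p.1)]
  refine tsum_congr (fun q => ?_)
  exact ((Equiv.mk
    (fun p : {p : sepMin T // (⟨minW hW p.1, hmem p⟩ : sepMin W) = q} =>
      (⟨p.1.1, p.1.2, congrArg Subtype.val p.2⟩ : Fib hW T q.1))
    (fun p => ⟨⟨p.1, p.2.1⟩, Subtype.ext p.2.2⟩)
    (fun p => rfl) (fun p => rfl)).symm.tsum_eq
      (fun p => pathWeight S p.1.1)).symm

end Aux18e
section Aux18f

variable {A X : Type*}
open Path

/-- The weights of an antichain of paths extending `q` sum to at most the weight of `q`. -/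
theorem tsum_antichain_le (S : FPTS A X) (q : Path A X) {ι : Type*} (e : ι → Path A X)
    (hinje : Function.Injective e)
    (hroot : ∀ i, q.le (e i))
    (hanti : ∀ i j, (e i).le (e j) → e i = e j) :
    ∑' i, pathWeight S (e i) ≤ pathWeight S q := by
  rw [ENNReal.tsum_eq_iSup_sum]
  refine iSup_le (fun F => ?_)
  have hstart : ∀ i, (e i).start = q.start := fun i => (le_iff_steps.mp (hroot i)).1.symm
  have hinj : ∀ i ∈ F, ∀ j ∈ F, (e i).steps = (e j).steps → i = j := by
    intro i _ j _ h
    exact hinje (eq_of_start_steps (by rw [hstart i, hstart j]) h)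
  calc ∑ i ∈ F, pathWeight S (e i)
      = ∑ l ∈ F.image (fun i => (e i).steps), lweight S q.start l := by
        rw [Finset.sum_image hinj]
        refine Finset.sum_congr rfl (fun i _ => ?_)
        rw [pathWeight_eq_lweight, hstart i]
    _ ≤ lweight S q.start q.steps := by
        refine antichain_sum_root S q.start q.steps _ ?_ ?_
        · intro l hl
          obtain ⟨i, _, rfl⟩ := Finset.mem_image.mp hl
          exact (le_iff_steps.mp (hroot i)).2
        · intro l1 h1 l2 h2 hpre
          obtain ⟨i, _, rfl⟩ := Finset.mem_image.mp h1
          obtain ⟨j, _, rfl⟩ := Finset.mem_image.mp h2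
          have : (e i).le (e j) :=
            le_iff_steps.mpr ⟨by rw [hstart i, hstart j], hpre⟩
          rw [hanti i j this]
    _ = pathWeight S q := (pathWeight_eq_lweight S q).symm

/-- Fiber sums are bounded by the weight of the base point. -/
theorem fib_tsum_le (S : FPTS A X) {W : Set (Path A X)} (hW : W ∈ pathUpSets A X)
    {T : Set (Path A X)} (hTW : T ⊆ W) (q : Path A X) :
    ∑' p : Fib hW T q, pathWeight S p.1 ≤ pathWeight S q := by
  by_cases hq : ∃ p₀ : Path A X, p₀ ∈ Fib hW T q
  · obtain ⟨p₀, hp₀⟩ := hq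
    have hqm : q = minW hW p₀ := hp₀.2.symm
    refine tsum_antichain_le S q Subtype.val Subtype.val_injective ?_ ?_
    · rintro ⟨p, hp, hpq⟩
      exact hpq ▸ minW_le hW (hTW hp.1)
    · rintro ⟨p, hp, hpq⟩ ⟨r, hr, hrq⟩ hle
      have : p = r := hr.2 p hp.1 hle
      exact this
  · have : IsEmpty (Fib hW T q) := ⟨fun p => hq ⟨p.1, p.2⟩⟩
    rw [tsum_empty]
    exact zero_le
  
/-- If `q` itself lies in `T`, the fiber over `q` is `{q}`. -/
theorem fib_eq_singleton {W : Set (Path A X)} (hW : W ∈ pathUpSets A X)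
    {T : Set (Path A X)} (hT : T ∈ pathUpSets A X) (hTW : T ⊆ W) {q : Path A X}
    (hq : q ∈ sepMin W) (hqT : q ∈ T) : Fib hW T q = {q} := by
  have hqT' : q ∈ sepMin T := ⟨hqT, fun r hr hrq => hq.2 r (hTW hr) hrq⟩
  ext p
  constructor
  · rintro ⟨hp, hpq⟩
    have hle : q.le p := hpq ▸ minW_le hW (hTW hp.1)
    exact (hp.2 q hqT hle).symm ▸ rfl
  · rintro rfl
    exact ⟨hqT', minW_eq_self hW hq⟩

theorem fib_singleton_tsum (S : FPTS A X) {q : Path A X} {F : Set (Path A X)}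
    (hF : F = {q}) : ∑' p : F, pathWeight S p.1 = pathWeight S q := by
  subst hF
  exact tsum_singleton q (pathWeight S)

/-- Swap lemma: over a base point `q ∈ U \ V`, the fibers of `sepMin V` and
`sepMin (U ∩ V)` coincide. -/
theorem fib_swap {U V : Set (Path A X)} (hU : U ∈ pathUpSets A X)
    (hV : V ∈ pathUpSets A X) (hW : U ∪ V ∈ pathUpSets A X) {q : Path A X}
    (hq : q ∈ sepMin (U ∪ V)) (hq1 : q ∈ U) (hq2 : q ∉ V) :
    Fib hW V q = Fib hW (U ∩ V) q := by
  ext p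
  constructor
  · rintro ⟨hp, hpq⟩
    have hle : q.le p := hpq ▸ minW_le hW (Or.inr hp.1)
    have hpU : p ∈ U := hU q hq1 p hle
    exact ⟨⟨⟨hpU, hp.1⟩, fun r hr hrp => hp.2 r hr.2 hrp⟩, hpq⟩
  · rintro ⟨hp, hpq⟩
    have hpW : p ∈ U ∪ V := Or.inr hp.1.2
    have hle : q.le p := hpq ▸ minW_le hW hpW
    refine ⟨⟨hp.1.2, fun r hr hrp => ?_⟩, hpq⟩
    have hqr : q.le r := by
      have := minW_least hW hpW r (Or.inr hr) hrp
      rwa [hpq] at this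
    have hrU : r ∈ U := hU q hq1 r hqr
    exact hp.2 r ⟨hrU, hr⟩ hrp

/-- Swap lemma, symmetric version: over `q ∈ V \ U`, the fibers of `sepMin U` and
`sepMin (U ∩ V)` coincide. -/
theorem fib_swap' {U V : Set (Path A X)} (hU : U ∈ pathUpSets A X)
    (hV : V ∈ pathUpSets A X) (hW : U ∪ V ∈ pathUpSets A X) {q : Path A X}
    (hq : q ∈ sepMin (U ∪ V)) (hq1 : q ∈ V) (hq2 : q ∉ U) :
    Fib hW U q = Fib hW (U ∩ V) q := by
  ext p
  constructor
  · rintro ⟨hp, hpq⟩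
    have hle : q.le p := hpq ▸ minW_le hW (Or.inl hp.1)
    have hpV : p ∈ V := hV q hq1 p hle
    exact ⟨⟨⟨hp.1, hpV⟩, fun r hr hrp => hp.2 r hr.1 hrp⟩, hpq⟩
  · rintro ⟨hp, hpq⟩
    have hpW : p ∈ U ∪ V := Or.inl hp.1.1
    have hle : q.le p := hpq ▸ minW_le hW hpW
    refine ⟨⟨hp.1.1, fun r hr hrp => ?_⟩, hpq⟩
    have hqr : q.le r := by
      have := minW_least hW hpW r (Or.inl hr) hrp
      rwa [hpq] at this
    have hrV : r ∈ V := hV q hq1 r hqr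
    exact hp.2 r ⟨hr, hrV⟩ hrp

end Aux18f
section Aux18g

variable {A X : Type*}
open Path

theorem mu_mono (S : FPTS A X) {U V : Set (Path A X)} (hV : V ∈ pathUpSets A X)
    (hUV : U ⊆ V) :
    ∑' p : sepMin U, pathWeight S p.1 ≤ ∑' p : sepMin V, pathWeight S p.1 := by
  rw [mu_decomp S hV hUV]
  exact ENNReal.tsum_le_tsum (fun q => fib_tsum_le S hV hUV q.1)

theorem mu_modular (S : FPTS A X) {U V : Set (Path A X)} (hU : U ∈ pathUpSets A X)
    (hV : V ∈ pathUpSets A X) :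
    (∑' p : sepMin U, pathWeight S p.1) + ∑' p : sepMin V, pathWeight S p.1 =
      (∑' p : sepMin (U ∪ V), pathWeight S p.1) + ∑' p : sepMin (U ∩ V), pathWeight S p.1 := by
  have hW := union_mem_pathUpSets hU hV
  have hI := inter_mem_pathUpSets hU hV
  have hIW : U ∩ V ⊆ U ∪ V := fun p hp => Or.inl hp.1
  rw [mu_decomp S hW Set.subset_union_left, mu_decomp S hW Set.subset_union_right,
    mu_decomp S hW hIW, ← ENNReal.tsum_add, ← ENNReal.tsum_add]
  refine tsum_congr (fun q => ?_)
  by_cases hqU : q.1 ∈ U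
  · by_cases hqV : q.1 ∈ V
    · rw [fib_singleton_tsum S (fib_eq_singleton hW hU Set.subset_union_left q.2 hqU),
        fib_singleton_tsum S (fib_eq_singleton hW hV Set.subset_union_right q.2 hqV),
        fib_singleton_tsum S (fib_eq_singleton hW hI hIW q.2 ⟨hqU, hqV⟩)]
    · rw [fib_singleton_tsum S (fib_eq_singleton hW hU Set.subset_union_left q.2 hqU),
        fib_swap hU hV hW q.2 hqU hqV]
  · have hqV : q.1 ∈ V := q.2.1.resolve_left hqU
    rw [fib_singleton_tsum S (fib_eq_singleton hW hV Set.subset_union_right q.2 hqV),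
      fib_swap' hU hV hW q.2 hqV hqU, add_comm (pathWeight S q.1)]

end Aux18g

theorem stmt18 {A X : Type*} [Countable A] [Countable X] (S : FPTS A X) :
    IsValuationOn (pathUpSets A X) (fun U => ∑' p : sepMin U, pathWeight S p.1) ∧
    IsScottContinuousOn (pathUpSets A X) (fun U => ∑' p : sepMin U, pathWeight S p.1) ∧
    IsLocallyFiniteOn (pathUpSets A X) (fun U => ∑' p : sepMin U, pathWeight S p.1) := by
  refine ⟨⟨?_, ?_, ?_⟩, ?_, ?_⟩
  · -- strictness
    have : IsEmpty (sepMin (∅ : Set (Path A X))) := ⟨fun p => p.2.1⟩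
    exact tsum_empty
  · -- monotonicity
    intro U _ V hV hUV
    exact mu_mono S hV hUV
  · -- modularity
    intro U hU V hV
    exact mu_modular S hU hV
  · -- Scott continuity
    intro 𝒟 hne hopen hdir
    refine le_antisymm ?_ ?_
    · show (∑' p : sepMin (⋃₀ 𝒟), pathWeight S p.1) ≤ _
      rw [ENNReal.tsum_eq_iSup_sum]
      refine iSup_le (fun F => ?_)
      have hcover : ∃ U ∈ 𝒟, ∀ p ∈ F, (p : Path A X) ∈ U := by
        classical
        induction F using Finset.induction_on with
        | empty =>
          obtain ⟨U, hU⟩ := hne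
          exact ⟨U, hU, by simp⟩
        | insert p F hnotmem ih =>
          obtain ⟨U, hU, hFU⟩ := ih
          obtain ⟨U', hU', hpU'⟩ := p.2.1
          obtain ⟨W, hW𝒟, hUW, hU'W⟩ := hdir U hU U' hU'
          refine ⟨W, hW𝒟, fun r hr => ?_⟩
          rcases Finset.mem_insert.mp hr with rfl | hr
          · exact hU'W hpU'
          · exact hUW (hFU r hr)
      obtain ⟨U, hU𝒟, hFU⟩ := hcover
      have hmem : ∀ pp : {x // x ∈ F}, (pp.1 : Path A X) ∈ sepMin U := by
        intro pp
        refine ⟨hFU pp.1 pp.2, fun r hr hrle => ?_⟩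
        exact pp.1.2.2 r ⟨U, hU𝒟, hr⟩ hrle
      calc ∑ p ∈ F, pathWeight S p.1
          = ∑ pp ∈ F.attach, pathWeight S pp.1.1 := (Finset.sum_attach F _).symm
        _ = ∑ r ∈ F.attach.image (fun pp => (⟨pp.1.1, hmem pp⟩ : sepMin U)),
              pathWeight S r.1 := by
            rw [Finset.sum_image]
            intro pp _ qq _ h
            rwa [Subtype.mk.injEq, ← Subtype.ext_iff, ← Subtype.ext_iff] at h
        _ ≤ ∑' r : sepMin U, pathWeight S r.1 := ENNReal.sum_le_tsum _
        _ ≤ ⨆ U ∈ 𝒟, ∑' p : sepMin U, pathWeight S p.1 :=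
              le_biSup (fun U => ∑' p : sepMin U, pathWeight S p.1) hU𝒟
    · refine iSup_le (fun U => iSup_le (fun hU => ?_))
      exact mu_mono S (sUnion_mem_pathUpSets hopen) (fun p hp => ⟨U, hU, hp⟩)
  · -- local finiteness
    intro p
    refine ⟨{q | p.le q}, fun r hr q hq => Path.le_trans' hr hq, Path.le_refl' p, ?_⟩
    have hsep : sepMin {q | p.le q} = {p} := by
      ext r
      constructor
      · rintro ⟨hr1, hr2⟩
        exact (hr2 p (Path.le_refl' p) hr1).symm ▸ rfl
      · intro hr
        rw [Set.mem_singleton_iff] at hr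
        subst hr
        exact ⟨Path.le_refl' r, fun r' hr' hle => Path.le_antisymm' hle hr'⟩
    show (∑' r : sepMin {q | p.le q}, pathWeight S r.1) < ⊤
    rw [fib_singleton_tsum S hsep]
    exact lt_of_le_of_lt (pathWeight_le_one S p) ENNReal.one_lt_top

end PaperBB
end

section
/- Let (X, A_τ, →) be a labelled transition system and let α : X → P(Path_∼(X)) be given by α(x) = { [p] | p is an execution from x with trace(p) ∈ τ*a for some a ∈ A, or trace(p) ∈ τ* }. Then two states x, x' ∈ X are branching bisimilar if and only if they are P∘Path_∼-behaviourally equivalent, i.e., iff there exist a set Y, a function β : Y → P(Path_∼(Y)), and a function f : X → Y with β(f(z)) = { Path_∼(f)(c) | c ∈ α(z) } for all z ∈ X, such that f(x) = f(x'). -/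
open scoped Classical ENNReal

namespace PaperBB

/-! ## Infrastructure for the proof of Statement 19 -/

section Stmt19Infra

variable {A X Y : Type}

/-- k-th state along a list of (label, target) steps, starting from `x`. -/
def stateOf (x : X) : List (Option A × X) → ℕ → X
  | _, 0 => x
  | [], _ + 1 => x
  | (_, y) :: l, k + 1 => stateOf y l k

@[simp] theorem stateOf_zero (x : X) (l : List (Option A × X)) : stateOf x l 0 = x := by
  cases l <;> rfl

@[simp] theorem stateOf_nil (x : X) (k : ℕ) : stateOf x ([] : List (Option A × X)) k = x := by
  cases k <;> rfl

@[simp] theorem stateOf_cons (x : X) (a : Option A) (y : X) (l : List (Option A × X)) (k : ℕ) :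
    stateOf x ((a, y) :: l) (k + 1) = stateOf y l k := rfl

theorem stateOf_getElem (x : X) (l : List (Option A × X)) (k : ℕ) (h : k < l.length) :
    stateOf x l (k + 1) = (l[k]).2 := by
  induction l generalizing x k with
  | nil => simp at h
  | cons e l ih =>
    obtain ⟨a, y⟩ := e
    cases k with
    | zero => simp
    | succ k => simpa using ih y k (by simpa using h)

theorem stateOf_append (x : X) (s t : List (Option A × X)) (k : ℕ) :
    stateOf x (s ++ t) (s.length + k) = stateOf (stateOf x s s.length) t k := by
  induction s generalizing x with
  | nil => simp
  | cons e s ih =>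
    obtain ⟨a, y⟩ := e
    have h1 : s.length + 1 + k = (s.length + k) + 1 := by omega
    rw [List.cons_append, List.length_cons, h1, stateOf_cons, stateOf_cons, ih]

theorem stateOf_append_of_le (x : X) (s t : List (Option A × X)) (k : ℕ) (h : k ≤ s.length) :
    stateOf x (s ++ t) k = stateOf x s k := by
  induction s generalizing x k with
  | nil => simp_all
  | cons e s ih =>
    obtain ⟨a, y⟩ := e
    cases k with
    | zero => simp
    | succ k => simpa using ih y k (by simpa using h)

/-- destuttering of a step list, relative to a current state. -/
noncomputable def dF (u : X) : List (Option A × X) → List (Option A × X)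
  | [] => []
  | (a, y) :: l => if a = none ∧ y = u then dF y l else (a, y) :: dF y l

@[simp] theorem dF_nil (u : X) : dF u ([] : List (Option A × X)) = [] := rfl

theorem dF_cons (u : X) (a : Option A) (y : X) (l : List (Option A × X)) :
    dF u ((a, y) :: l) = if a = none ∧ y = u then dF y l else (a, y) :: dF y l := rfl

theorem dF_append (u : X) (s t : List (Option A × X)) :
    dF u (s ++ t) = dF u s ++ dF (stateOf u s s.length) t := by
  induction s generalizing u with
  | nil => simp
  | cons e s ih =>
    obtain ⟨a, y⟩ := e
    rw [List.cons_append, dF_cons, dF_cons, List.length_cons, stateOf_cons, ih]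
    split <;> simp

theorem dF_singleton (u : X) (a : Option A) (y : X) :
    dF u [(a, y)] = if a = none ∧ y = u then [] else [(a, y)] := by
  rw [dF_cons]; split <;> rfl

/-- a Tr-compatible chain of steps from a state. -/
inductive ChainFrom (Tr : X → Option A → X → Prop) : X → List (Option A × X) → Prop
  | nil (x : X) : ChainFrom Tr x []
  | cons {x : X} {a : Option A} {y : X} {l : List (Option A × X)} :
      Tr x a y → ChainFrom Tr y l → ChainFrom Tr x ((a, y) :: l)

theorem ChainFrom.append {Tr : X → Option A → X → Prop} {x : X}
    {s t : List (Option A × X)} (hs : ChainFrom Tr x s)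
    (ht : ChainFrom Tr (stateOf x s s.length) t) : ChainFrom Tr x (s ++ t) := by
  induction hs with
  | nil x => simpa using ht
  | cons h hs ih =>
    rw [List.length_cons, stateOf_cons] at ht
    exact ChainFrom.cons h (ih ht)

theorem ChainFrom.getElem {Tr : X → Option A → X → Prop} {x : X}
    {l : List (Option A × X)} (h : ChainFrom Tr x l) (k : ℕ) (hk : k < l.length) :
    Tr (stateOf x l k) (l[k]).1 (l[k]).2 := by
  induction h generalizing k with
  | nil => simp at hk
  | cons htr hc ih =>
    cases k with
    | zero => simpa using htr
    | succ k =>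
      have hk' : k < _ := Nat.succ_lt_succ_iff.mp (by simpa using hk)
      simpa [stateOf_cons] using ih k hk'

theorem chainFrom_of_forall {Tr : X → Option A → X → Prop} {x : X}
    {l : List (Option A × X)}
    (h : ∀ k (hk : k < l.length), Tr (stateOf x l k) (l[k]).1 (l[k]).2) :
    ChainFrom Tr x l := by
  induction l generalizing x with
  | nil => exact ChainFrom.nil x
  | cons e l ih =>
    obtain ⟨a, y⟩ := e
    refine ChainFrom.cons (by exact h 0 (by simp)) (ih fun k hk => ?_)
    have := h (k+1) (by simpa using Nat.succ_lt_succ hk)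
    simpa [stateOf_cons] using this


theorem prefix_concat_cases {w l : Word A} {a : Option A} (h : w <+: l ++ [a]) :
    w <+: l ∨ w = l ++ [a] := by
  rcases Nat.lt_or_ge w.length (l ++ [a]).length with hlt | hge
  · left
    refine List.prefix_of_prefix_length_le h (List.prefix_append l [a]) ?_
    simp at hlt ⊢; omega
  · right
    exact List.IsPrefix.eq_of_length h (le_antisymm h.length_le hge)

/-! ### Path infrastructure -/

/-- The state of `p` after `n` steps. -/
def pstate (p : Path A X) (n : ℕ) : X := p.fn ⟨p.word.take n, List.take_prefix _ _⟩

theorem fn_eq_pstate (p : Path A X) {σ : Word A} (h : σ <+: p.word) :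
    p.fn ⟨σ, h⟩ = pstate p σ.length := by
  obtain ⟨t, ht⟩ := h
  have hσ : p.word.take σ.length = σ := by rw [← ht]; exact List.take_left
  exact (congrArg p.fn (Subtype.ext hσ)).symm

@[simp] theorem pstate_zero (p : Path A X) : pstate p 0 = p.start :=
  congrArg p.fn (Subtype.ext (by simp))

@[simp] theorem pstate_map (f : X → Y) (p : Path A X) (n : ℕ) :
    pstate (p.map f) n = f (pstate p n) := rfl

/-- The list of steps of a path. -/
def toSteps (p : Path A X) : List (Option A × X) :=
  List.ofFn (fun i : Fin p.word.length => (p.word.get i, pstate p (i + 1)))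

@[simp] theorem toSteps_length (p : Path A X) : (toSteps p).length = p.word.length := by
  simp [toSteps]

theorem toSteps_getElem (p : Path A X) (k : ℕ) (hk : k < p.word.length) :
    (toSteps p)[k]'(by simpa using hk) = (p.word[k], pstate p (k + 1)) := by
  simp [toSteps]

theorem map_fst_toSteps (p : Path A X) : (toSteps p).map Prod.fst = p.word := by
  simp only [toSteps, List.map_ofFn, Function.comp]
  exact List.ofFn_get p.word

theorem toSteps_map (f : X → Y) (p : Path A X) :
    toSteps (p.map f) = (toSteps p).map (fun s => (s.1, f s.2)) := by
  simp [toSteps, List.map_ofFn]; rfl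

theorem stateOf_take_toSteps (p : Path A X) (k n : ℕ) (hk : k ≤ n) (hn : n ≤ p.word.length) :
    stateOf p.start ((toSteps p).take n) k = pstate p k := by
  cases k with
  | zero => simp
  | succ k =>
    have hk' : k < ((toSteps p).take n).length := by
      simp only [List.length_take, toSteps_length]; omega
    rw [stateOf_getElem _ _ _ hk', List.getElem_take, toSteps_getElem p k (by omega)]

theorem stateOf_toSteps (p : Path A X) (k : ℕ) (hk : k ≤ p.word.length) :
    stateOf p.start (toSteps p) k = pstate p k := by
  have := stateOf_take_toSteps p k p.word.length hk le_rfl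
  rwa [List.take_of_length_le (by simp)] at this

/-- Paths built from a start state and a list of steps. -/
def ofList (x : X) (l : List (Option A × X)) : Path A X :=
  ⟨l.map Prod.fst, fun σ => stateOf x l σ.1.length⟩

@[simp] theorem ofList_word (x : X) (l : List (Option A × X)) :
    (ofList x l).word = l.map Prod.fst := rfl

@[simp] theorem ofList_start (x : X) (l : List (Option A × X)) :
    (ofList x l).start = x := stateOf_zero x l

theorem stateOf_of_le (x : X) (l : List (Option A × X)) (k : ℕ) (h : l.length ≤ k) :
    stateOf x l k = stateOf x l l.length := by
  induction l generalizing x k with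
  | nil => simp
  | cons e l ih =>
    obtain ⟨a, y⟩ := e
    cases k with
    | zero => simp at h
    | succ k => simpa using ih y k (by simpa using h)

theorem pstate_ofList (x : X) (l : List (Option A × X)) (n : ℕ) :
    pstate (ofList x l) n = stateOf x l n := by
  show stateOf x l ((l.map Prod.fst).take n).length = stateOf x l n
  rw [List.length_take, List.length_map]
  rcases le_total n l.length with h | h
  · rw [min_eq_left h]
  · rw [min_eq_right h, stateOf_of_le _ _ _ h]

theorem toSteps_ofList (x : X) (l : List (Option A × X)) : toSteps (ofList x l) = l := by
  apply List.ext_getElem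
  · simp
  · intro i h1 h2
    have hi : i < l.length := by simpa using h2
    have := toSteps_getElem (ofList x l) i (by simpa using hi)
    rw [this]
    refine Prod.ext ?_ ?_
    · show (l.map Prod.fst)[i]'(by simpa using hi) = _
      simp
    · show pstate (ofList x l) (i+1) = (l[i]).2
      rw [pstate_ofList, stateOf_getElem _ _ _ hi]

/-! ### Executions and chains -/

theorem exec_chainFrom {Tr : X → Option A → X → Prop} {x : X} {p : Path A X}
    (h : IsExecLTS Tr x p) : ChainFrom Tr x (toSteps p) := by
  obtain ⟨hstart, hstep⟩ := h
  subst hstart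
  refine chainFrom_of_forall fun k hk => ?_
  have hk' : k < p.word.length := by simpa using hk
  rw [toSteps_getElem p k hk']
  have htake : p.word.take k ++ [p.word[k]] = p.word.take (k + 1) := by
    rw [List.take_succ, List.getElem?_eq_getElem hk']; rfl
  have hpre : p.word.take k ++ [p.word[k]] <+: p.word := htake ▸ List.take_prefix _ _
  have := hstep (p.word.take k) (p.word[k]) hpre
  rw [fn_eq_pstate, fn_eq_pstate] at this
  have hlen1 : (p.word.take k).length = k := by simp; omega
  have hlen2 : (p.word.take k ++ [p.word[k]]).length = k + 1 := by simp; omega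
  rw [hlen1, hlen2] at this
  rw [stateOf_toSteps p k (le_of_lt hk')]
  exact this

theorem chainFrom_exec {Tr : X → Option A → X → Prop} {x : X} {l : List (Option A × X)}
    (h : ChainFrom Tr x l) : IsExecLTS Tr x (ofList x l) := by
  refine ⟨ofList_start x l, fun σ a hpre => ?_⟩
  have hlen : σ.length < l.length := by
    have := hpre.length_le
    simp only [ofList_word, List.length_map, List.length_append, List.length_cons,
      List.length_nil] at this
    omega
  have ha : a = (l[σ.length]).1 := by
    have h1 : (σ ++ [a])[σ.length]'(by simp) = a := by
      simp
    have h2 := hpre.getElem (i := σ.length) (by simp)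
    rw [h1] at h2
    rw [h2]
    show (l.map Prod.fst)[σ.length]'(by simpa using hlen) = _
    simp
  show Tr (stateOf x l ((σ : Word A)).length) a (stateOf x l (σ ++ [a]).length)
  rw [List.length_append, List.length_cons, List.length_nil]
  rw [ha, stateOf_getElem _ _ _ hlen]
  exact h.getElem σ.length hlen

/-! ### The reduced form of the stutter normal form -/

/-- The step list of the stutter normal form, mirrored on `stutterWordAux`. -/
noncomputable def red (p : Path A X) : ℕ → List (Option A × X)
  | 0 => []
  | n + 1 =>
    if h : n < p.word.length then
      if p.word.get ⟨n, h⟩ = none ∧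
          p.fn ⟨p.word.take (n + 1), List.take_prefix _ _⟩ =
            p.fn ⟨p.word.take n, List.take_prefix _ _⟩ then red p n
      else red p n ++ [(p.word.get ⟨n, h⟩, p.fn ⟨p.word.take (n + 1), List.take_prefix _ _⟩)]
    else []

theorem sWA_eq_red (p : Path A X) (n : ℕ) :
    Path.stutterWordAux p n = (red p n).map Prod.fst := by
  induction n with
  | zero => rfl
  | succ n ih =>
    rw [Path.stutterWordAux, red]
    split
    · split
      · exact ih
      · simp [ih]
    · rfl

theorem red_mono (p : Path A X) (m n : ℕ) (hmn : m ≤ n) (hn : n ≤ p.word.length) :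
    red p m <+: red p n := by
  induction n with
  | zero => cases Nat.le_zero.mp hmn; exact List.prefix_refl _
  | succ n ih =>
    rcases Nat.eq_or_lt_of_le hmn with rfl | hlt
    · exact List.prefix_refl _
    have h1 : red p m <+: red p n := ih (by omega) (by omega)
    rw [red]
    rw [dif_pos (show n < p.word.length by omega)]
    split
    · exact h1
    · exact h1.trans ⟨_, rfl⟩

theorem lemA (p : Path A X) : ∀ n, n ≤ p.word.length → ∀ m, m ≤ n →
    Path.stutterWordAux p m = Path.stutterWordAux p n → pstate p m = pstate p n := by
  intro n
  induction n with
  | zero => intro _ m hm _; cases Nat.le_zero.mp hm; rfl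
  | succ n ih =>
    intro hn m hm hsw
    rcases Nat.eq_or_lt_of_le hm with rfl | hlt
    · rfl
    have hm' : m ≤ n := by omega
    have hnlt : n < p.word.length := by omega
    rw [Path.stutterWordAux, dif_pos hnlt] at hsw
    split at hsw
    · rename_i hc
      have := ih (by omega) m hm' hsw
      show pstate p m = p.fn _
      rw [this]
      exact hc.2.symm
    · exfalso
      have hpre : Path.stutterWordAux p m <+: Path.stutterWordAux p n := by
        rw [sWA_eq_red, sWA_eq_red]
        exact (red_mono p m n hm' (by omega)).map _
      have h1 := hpre.length_le
      have h2 := congrArg List.length hsw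
      simp at h2
      omega

theorem lemB (p : Path A X) : ∀ n, n ≤ p.word.length → ∀ w : Word A,
    w <+: (red p n).map Prod.fst →
    ∃ m, m ≤ n ∧ Path.stutterWordAux p m = w ∧
      pstate p m = stateOf p.start (red p n) w.length := by
  intro n
  induction n with
  | zero =>
    intro _ w hw
    rw [show red p 0 = [] from rfl] at hw ⊢
    simp only [List.map_nil] at hw
    rw [List.prefix_nil.mp hw]
    exact ⟨0, le_rfl, rfl, by simp⟩
  | succ n ih =>
    intro hn w hw
    have hnlt : n < p.word.length := by omega
    rw [red, dif_pos hnlt] at hw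
    split at hw
    · rename_i hc
      rw [red, dif_pos hnlt, if_pos hc]
      obtain ⟨m, hm, h1, h2⟩ := ih (by omega) w hw
      exact ⟨m, by omega, h1, h2⟩
    · rename_i hc
      rw [red, dif_pos hnlt, if_neg hc]
      rw [List.map_append, List.map_cons, List.map_nil] at hw
      rcases (prefix_concat_cases hw) with hw' | rfl
      · obtain ⟨m, hm, h1, h2⟩ := ih (by omega) w hw'
        refine ⟨m, by omega, h1, ?_⟩
        rw [stateOf_append_of_le _ _ _ _ ?_, h2]
        simpa using hw'.length_le
      · refine ⟨n + 1, le_rfl, ?_, ?_⟩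
        · rw [sWA_eq_red, red, dif_pos hnlt, if_neg hc]
          simp
        · have hlen : ((red p n).map Prod.fst ++ [p.word.get ⟨n, hnlt⟩]).length
              = (red p n).length + 1 := by simp
          rw [hlen, stateOf_getElem _ _ _ (by simp)]
          simp
          rfl


theorem Path.ext'_s19 {p q : Path A X} (hw : p.word = q.word)
    (hf : ∀ (σ : Word A) (h1 : σ <+: p.word) (h2 : σ <+: q.word),
      p.fn ⟨σ, h1⟩ = q.fn ⟨σ, h2⟩) : p = q := by
  obtain ⟨w, f⟩ := p
  obtain ⟨w', f'⟩ := q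
  cases hw
  simp only [Path.mk.injEq, heq_eq_eq, true_and]
  funext σ
  obtain ⟨σ, hσ⟩ := σ
  exact hf σ hσ hσ

theorem stutter_eq_ofList (p : Path A X) :
    p.stutter = ofList p.start (red p p.word.length) := by
  have hword : p.stutter.word = (red p p.word.length).map Prod.fst := by
    show Path.stutterBasis p ⟨p.word, List.prefix_refl _⟩ = _
    show Path.stutterWordAux p p.word.length = _
    exact sWA_eq_red p _
  refine Path.ext'_s19 hword fun σ h1 h2 => ?_
  haveI : Nonempty {w : Word A // w <+: p.word} := ⟨⟨[], Path.nilPrefix _⟩⟩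
  show p.fn (Function.invFun (Path.stutterBasis p) σ) = stateOf p.start (red p p.word.length) σ.length
  rw [hword] at h1
  obtain ⟨m, hm, hsw, hps⟩ := lemB p p.word.length le_rfl σ h1
  have hsur : Path.stutterBasis p ⟨p.word.take m, List.take_prefix _ _⟩ = σ := by
    show Path.stutterWordAux p (p.word.take m).length = σ
    rw [List.length_take, min_eq_left hm]
    exact hsw
  have hinv : Path.stutterBasis p (Function.invFun (Path.stutterBasis p) σ) = σ :=
    Function.invFun_eq ⟨_, hsur⟩
  set σ0 := Function.invFun (Path.stutterBasis p) σ with hσ0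
  have hfn : p.fn σ0 = pstate p σ0.1.length := by
    have : σ0 = ⟨σ0.1, σ0.2⟩ := rfl
    rw [this, fn_eq_pstate p σ0.2]
  have hswσ0 : Path.stutterWordAux p σ0.1.length = σ := hinv
  have hlenσ0 : σ0.1.length ≤ p.word.length := σ0.2.length_le
  have hpeq : pstate p σ0.1.length = pstate p m := by
    rcases le_total σ0.1.length m with h | h
    · exact lemA p m hm σ0.1.length h (hswσ0.trans hsw.symm)
    · exact (lemA p σ0.1.length hlenσ0 m h (hsw.trans hswσ0.symm)).symm
  rw [hfn, hpeq, hps]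

theorem red_eq_dF (p : Path A X) : ∀ n, n ≤ p.word.length →
    red p n = dF p.start ((toSteps p).take n) := by
  intro n
  induction n with
  | zero => intro _; rfl
  | succ n ih =>
    intro hn
    have hnlt : n < p.word.length := by omega
    have htake : (toSteps p).take (n + 1) = (toSteps p).take n ++ [(p.word[n], pstate p (n+1))] := by
      rw [List.take_succ, List.getElem?_eq_getElem (by simpa using hnlt), toSteps_getElem p n hnlt]
      rfl
    rw [htake, dF_append, ← ih (by omega)]
    have hst : stateOf p.start ((toSteps p).take n) ((toSteps p).take n).length = pstate p n := by
      have hl : ((toSteps p).take n).length = n := by simp; omega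
      rw [hl]
      exact stateOf_take_toSteps p n n le_rfl (by omega)
    rw [hst, dF_singleton]
    rw [red]
    rw [dif_pos hnlt]
    split
    · rename_i hc
      rw [if_pos]
      · simp
      · exact ⟨hc.1, hc.2⟩
    · rename_i hc
      rw [if_neg]
      · rfl
      · exact fun hx => hc ⟨hx.1, hx.2⟩

theorem red_len_eq_dF (p : Path A X) :
    red p p.word.length = dF p.start (toSteps p) := by
  rw [red_eq_dF p p.word.length le_rfl, List.take_of_length_le (by simp)]

theorem stutterEquiv_iff (p q : Path A X) :
    StutterEquiv p q ↔ p.start = q.start ∧ dF p.start (toSteps p) = dF q.start (toSteps q) := by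
  constructor
  · intro h
    have h' : ofList p.start (red p p.word.length) = ofList q.start (red q q.word.length) := by
      rw [← stutter_eq_ofList, ← stutter_eq_ofList]; exact h
    have hstart : p.start = q.start := by
      have := congrArg (fun r => pstate r 0) h'
      simpa using this
    have hred : red p p.word.length = red q q.word.length := by
      have hw := congrArg Path.word h'
      simp only [ofList_word] at hw
      have hlen : (red p p.word.length).length = (red q q.word.length).length := by
        have := congrArg List.length hw; simpa using this
      apply List.ext_getElem hlen
      intro i hi1 hi2
      refine Prod.ext ?_ ?_
      · have h3 : ((red p p.word.length).map Prod.fst)[i]'(by simpa using hi1)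
            = ((red q q.word.length).map Prod.fst)[i]'(by simpa using hi2) := by
          simp only [hw]
        simpa using h3
      · have := congrArg (fun r => pstate r (i+1)) h'
        simp only [pstate_ofList] at this
        rw [stateOf_getElem _ _ _ hi1, stateOf_getElem _ _ _ hi2] at this
        exact this
    rw [← red_len_eq_dF, ← red_len_eq_dF, hstart, hred]
    exact ⟨rfl, rfl⟩
  · rintro ⟨h1, h2⟩
    show p.stutter = q.stutter
    rw [stutter_eq_ofList, stutter_eq_ofList, red_len_eq_dF, red_len_eq_dF, h2, h1]

theorem dF_map_dF (f : X → Y) : ∀ (l : List (Option A × X)) (x : X),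
    dF (f x) ((dF x l).map (fun s => (s.1, f s.2))) = dF (f x) (l.map (fun s => (s.1, f s.2))) := by
  intro l
  induction l with
  | nil => intro x; rfl
  | cons e l ih =>
    intro x
    obtain ⟨a, y⟩ := e
    rw [dF_cons]
    split
    · rename_i hc
      rw [← hc.2, ih y]
      rw [List.map_cons, dF_cons, if_pos ⟨hc.1, rfl⟩]
    · rename_i hc
      rw [List.map_cons, List.map_cons, dF_cons, dF_cons, ih y]

theorem stutterEquiv_map (f : X → Y) {p q : Path A X} (h : StutterEquiv p q) :
    StutterEquiv (p.map f) (q.map f) := by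
  rw [stutterEquiv_iff] at h ⊢
  obtain ⟨h1, h2⟩ := h
  have hs : (p.map f).start = f p.start := rfl
  have hs' : (q.map f).start = f q.start := rfl
  refine ⟨by rw [hs, hs', h1], ?_⟩
  rw [hs, hs', toSteps_map, toSteps_map, ← dF_map_dF f (toSteps p) p.start,
    ← dF_map_dF f (toSteps q) q.start, h2, h1]

theorem pathQuot_mk_eq {p q : Path A X} : PathQuot.mk p = PathQuot.mk q ↔ StutterEquiv p q := by
  show (Quotient.mk _ p : PathQuot A X) = Quotient.mk _ q ↔ _
  exact ⟨fun h => Quotient.exact h, fun h => Quotient.sound (show p ≈ q from h)⟩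

theorem pathQuot_map_mk (f : X → Y) (p : Path A X) :
    PathQuot.map f (PathQuot.mk p) = PathQuot.mk (p.map f) := by
  show PathQuot.mk (Path.map f (PathQuot.mk p).out) = PathQuot.mk (p.map f)
  rw [pathQuot_mk_eq]
  exact stutterEquiv_map f (Quotient.mk_out p)

theorem pathQuot_map_eq_iff (f : X → Y) (p q : Path A X) :
    PathQuot.map f (PathQuot.mk p) = PathQuot.map f (PathQuot.mk q) ↔
    f p.start = f q.start ∧
      dF (f p.start) ((toSteps p).map (fun s => (s.1, f s.2)))
        = dF (f q.start) ((toSteps q).map (fun s => (s.1, f s.2))) := by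
  rw [pathQuot_map_mk, pathQuot_map_mk, pathQuot_mk_eq, stutterEquiv_iff]
  constructor
  · rintro ⟨h1, h2⟩
    refine ⟨h1, ?_⟩
    rw [← toSteps_map, ← toSteps_map]
    exact h2
  · rintro ⟨h1, h2⟩
    refine ⟨h1, ?_⟩
    rw [toSteps_map, toSteps_map]
    exact h2

/-! ### The backward direction -/

theorem dF_eq_nil_labels {v : X} : ∀ {l : List (Option A × X)}, dF v l = [] →
    ∀ s ∈ l, s.1 = none := by
  intro l
  induction l generalizing v with
  | nil => intro _ s hs; simp at hs
  | cons e l ih =>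
    obtain ⟨a, y⟩ := e
    intro h s hs
    rw [dF_cons] at h
    split at h
    · rename_i hc
      rcases List.mem_cons.mp hs with rfl | hs'
      · exact hc.1
      · exact ih h s hs'
    · simp at h

/-- τ-star-a extraction. -/
theorem DL2 {Tr : X → Option A → X → Prop} (f : X → Y) :
    ∀ (l : List (Option A × X)) (u : X) (n : ℕ) (a0 : A) {b : Option A} {c : Y},
    ChainFrom Tr u l → l.map Prod.fst = List.replicate n none ++ [some a0] →
    dF (f u) (l.map (fun s => (s.1, f s.2))) = [(b, c)] →
    b = some a0 ∧ ∃ w' w'', Relation.ReflTransGen (fun p q => Tr p none q) u w' ∧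
      Tr w' (some a0) w'' ∧ f w' = f u ∧ f w'' = c := by
  intro l
  induction l with
  | nil =>
    intro u n a0 b c _ hmap _
    exfalso
    have := congrArg List.length hmap
    simp at this
  | cons e l ih =>
    intro u n a0 b c hchain hmap hd
    obtain ⟨a1, y⟩ := e
    cases hchain with
    | cons htr hchain' =>
    cases n with
    | zero =>
      simp only [List.replicate_zero, List.nil_append, List.map_cons, List.cons.injEq] at hmap
      obtain ⟨ha1, hl⟩ := hmap
      have hlnil : l = [] := List.map_eq_nil_iff.mp hl
      subst hlnil
      subst ha1
      rw [List.map_cons, List.map_nil, dF_cons, if_neg (by simp)] at hd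
      have hbc : ((some a0 : Option A), f y) = (b, c) := by
        have := congrArg (fun l => l.head?) hd
        simpa using this
      injection hbc with h1 h2
      subst h1; subst h2
      exact ⟨rfl, u, y, Relation.ReflTransGen.refl, htr, rfl, rfl⟩
    | succ n =>
      rw [List.replicate_succ, List.cons_append, List.map_cons, List.cons.injEq] at hmap
      obtain ⟨ha1, hl⟩ := hmap
      subst ha1
      rw [List.map_cons, dF_cons] at hd
      split at hd
      · rename_i hc
        obtain ⟨hb, w', w'', hrt, htr', hw1, hw2⟩ := ih y n a0 hchain' hl hd
        exact ⟨hb, w', w'', Relation.ReflTransGen.head htr hrt, htr', hw1.trans hc.2, hw2⟩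
      · rename_i hc
        exfalso
        simp only [List.cons.injEq, Prod.mk.injEq] at hd
        have hnil : dF (f y) (l.map (fun s => (s.1, f s.2))) = [] := hd.2
        have hmem : some a0 ∈ l.map Prod.fst := by rw [hl]; simp
        obtain ⟨s, hs, hfst⟩ := List.mem_map.mp hmem
        have := dF_eq_nil_labels hnil (s.1, f s.2) (List.mem_map.mpr ⟨s, hs, rfl⟩)
        rw [hfst] at this
        simp at this

/-- τ-star extraction. -/
theorem DL1 {Tr : X → Option A → X → Prop} (f : X → Y) :
    ∀ (l : List (Option A × X)) (u : X) (n : ℕ) {b : Option A} {c : Y},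
    ChainFrom Tr u l → l.map Prod.fst = List.replicate n none →
    dF (f u) (l.map (fun s => (s.1, f s.2))) = [(b, c)] →
    b = none ∧ ∃ w' w'', Relation.ReflTransGen (fun p q => Tr p none q) u w' ∧
      Tr w' none w'' ∧ f w' = f u ∧ f w'' = c := by
  intro l
  induction l with
  | nil =>
    intro u n b c _ _ hd
    simp at hd
  | cons e l ih =>
    intro u n b c hchain hmap hd
    obtain ⟨a1, y⟩ := e
    cases hchain with
    | cons htr hchain' =>
    cases n with
    | zero => simp at hmap
    | succ n =>
      rw [List.replicate_succ, List.map_cons, List.cons.injEq] at hmap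
      obtain ⟨ha1, hl⟩ := hmap
      subst ha1
      rw [List.map_cons, dF_cons] at hd
      split at hd
      · rename_i hc
        obtain ⟨hb, w', w'', hrt, htr', hw1, hw2⟩ := ih y n hchain' hl hd
        exact ⟨hb, w', w'', Relation.ReflTransGen.head htr hrt, htr', hw1.trans hc.2, hw2⟩
      · rename_i hc
        have hbc : ((none : Option A), f y) = (b, c) := by
          have := congrArg (fun l => l.head?) hd
          simpa using this
        injection hbc with h1 h2
        subst h1; subst h2
        exact ⟨rfl, u, y, Relation.ReflTransGen.refl, htr, rfl, rfl⟩

theorem backward_bisim {Tr : X → Option A → X → Prop} {Y : Type}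
    (β : Y → Set (PathQuot A Y)) (f : X → Y)
    (hβ : ∀ z : X, β (f z) = PathQuot.map f '' ltsAlpha Tr z) :
    IsBranchingBisim Tr (fun u v => f u = f v) := by
  refine ⟨fun u v h => h.symm, ?_⟩
  intro z z' w a htr hf
  set p : Path A X := ofList z [(a, z')] with hp
  have hpexec : IsExecLTS Tr z p := chainFrom_exec (ChainFrom.cons htr (ChainFrom.nil _))
  have hpshape : (∃ (a0 : A) (n : ℕ), p.word = List.replicate n none ++ [some a0]) ∨
      (∃ n : ℕ, p.word = List.replicate n (none : Option A)) := by
    cases a with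
    | none => exact Or.inr ⟨1, by simp [hp]⟩
    | some a0 => exact Or.inl ⟨a0, 0, by simp [hp]⟩
  have hmem : PathQuot.mk p ∈ ltsAlpha Tr z := ⟨p, hpexec, hpshape, rfl⟩
  have hmem2 : PathQuot.map f (PathQuot.mk p) ∈ β (f z) := by
    rw [hβ z]; exact ⟨_, hmem, rfl⟩
  rw [hf, hβ w] at hmem2
  obtain ⟨c, hc, heq⟩ := hmem2
  obtain ⟨q, hqexec, hqshape, rfl⟩ := hc
  rw [pathQuot_map_eq_iff] at heq
  obtain ⟨-, hdf⟩ := heq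
  have hqstart : q.start = w := hqexec.1
  have hpstart : p.start = z := ofList_start z _
  rw [hqstart, hpstart] at hdf
  have htsp : toSteps p = [(a, z')] := toSteps_ofList z _
  rw [htsp] at hdf
  simp only [List.map_cons, List.map_nil] at hdf
  rw [dF_singleton] at hdf
  by_cases hTriv : a = none ∧ f z' = f z
  · exact Or.inl ⟨hTriv.1, hTriv.2.trans hf⟩
  · rw [if_neg hTriv] at hdf
    have hchain : ChainFrom Tr w (toSteps q) := exec_chainFrom hqexec
    have hmapfst : (toSteps q).map Prod.fst = q.word := map_fst_toSteps q
    right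
    rcases hqshape with ⟨a0, n, hword⟩ | ⟨n, hword⟩
    · obtain ⟨hb, w', w'', hrt, htr', hw1, hw2⟩ :=
        DL2 f (toSteps q) w n a0 hchain (by rw [hmapfst]; exact hword) hdf
      refine ⟨w', w'', hrt, ?_, ?_, hw2.symm⟩
      · rwa [← hb] at htr'
      · show f z = f w'
        rw [hf]; exact hw1.symm
    · obtain ⟨hb, w', w'', hrt, htr', hw1, hw2⟩ :=
        DL1 f (toSteps q) w n hchain (by rw [hmapfst]; exact hword) hdf
      refine ⟨w', w'', hrt, ?_, ?_, hw2.symm⟩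
      · rwa [← hb] at htr'
      · show f z = f w'
        rw [hf]; exact hw1.symm

/-! ### Semi-branching bisimulations -/

/-- Reflexive-transitive closure of the τ-transition relation. -/
def RTG (Tr : X → Option A → X → Prop) : X → X → Prop :=
  Relation.ReflTransGen (fun u v => Tr u none v)

/-- Semi-branching bisimulations. -/
def IsSemi (Tr : X → Option A → X → Prop) (R : X → X → Prop) : Prop :=
  Symmetric R ∧ ∀ x x' y a, Tr x a x' → R x y →
    ∃ y', RTG Tr y y' ∧
      ((a = none ∧ R x y' ∧ R x' y') ∨ ∃ y'', Tr y' a y'' ∧ R x y' ∧ R x' y'')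

/-- Semi-branching bisimilarity. -/
def Bsim (Tr : X → Option A → X → Prop) (u v : X) : Prop :=
  ∃ R, IsSemi Tr R ∧ R u v

theorem isSemi_eq (Tr : X → Option A → X → Prop) : IsSemi Tr Eq := by
  refine ⟨fun u v h => h.symm, fun x x' y a htr hxy => ?_⟩
  subst hxy
  exact ⟨x, Relation.ReflTransGen.refl, Or.inr ⟨x', htr, rfl, rfl⟩⟩

theorem bsim_refl (Tr : X → Option A → X → Prop) (x : X) : Bsim Tr x x :=
  ⟨Eq, isSemi_eq Tr, rfl⟩

theorem bsim_symm {Tr : X → Option A → X → Prop} {u v : X} (h : Bsim Tr u v) : Bsim Tr v u := by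
  obtain ⟨R, hR, huv⟩ := h
  exact ⟨R, hR, hR.1 huv⟩

theorem bsim_isSemi (Tr : X → Option A → X → Prop) : IsSemi Tr (Bsim Tr) := by
  refine ⟨fun u v h => bsim_symm h, fun x x' y a htr hxy => ?_⟩
  obtain ⟨R, hR, hxy⟩ := hxy
  obtain ⟨y', hrt, hopt⟩ := hR.2 x x' y a htr hxy
  refine ⟨y', hrt, ?_⟩
  rcases hopt with ⟨ha, h1, h2⟩ | ⟨y'', htr', h1, h2⟩
  · exact Or.inl ⟨ha, ⟨R, hR, h1⟩, ⟨R, hR, h2⟩⟩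
  · exact Or.inr ⟨y'', htr', ⟨R, hR, h1⟩, ⟨R, hR, h2⟩⟩

theorem semi_step {Tr : X → Option A → X → Prop} {R : X → X → Prop} (hR : IsSemi Tr R)
    {u u' v : X} (huv : R u v) (hstep : Tr u none u') :
    ∃ v', RTG Tr v v' ∧ R u' v' := by
  obtain ⟨y', hrt, hopt⟩ := hR.2 u u' v none hstep huv
  rcases hopt with ⟨-, -, h2⟩ | ⟨y'', htr', -, h2⟩
  · exact ⟨y', hrt, h2⟩
  · exact ⟨y'', hrt.tail htr', h2⟩

theorem semi_lift {Tr : X → Option A → X → Prop} {R : X → X → Prop} (hR : IsSemi Tr R)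
    {u v u' : X} (huv : R u v) (hrt : RTG Tr u u') :
    ∃ v', RTG Tr v v' ∧ R u' v' := by
  induction hrt with
  | refl => exact ⟨v, Relation.ReflTransGen.refl, huv⟩
  | tail _ hstep ih =>
    obtain ⟨v1, hrt1, h1⟩ := ih
    obtain ⟨v2, hrt2, h2⟩ := semi_step hR h1 hstep
    exact ⟨v2, hrt1.trans hrt2, h2⟩

theorem semi_comp_aux {Tr : X → Option A → X → Prop} {R1 R2 : X → X → Prop}
    (h1 : IsSemi Tr R1) (h2 : IsSemi Tr R2) {x x' m v : X} {a : Option A}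
    (htr : Tr x a x') (hxm : R1 x m) (hmv : R2 m v)
    (C : X → X → Prop) (hC : ∀ p q r, R1 p q → R2 q r → C p r) :
    ∃ y', RTG Tr v y' ∧
      ((a = none ∧ C x y' ∧ C x' y') ∨ ∃ y'', Tr y' a y'' ∧ C x y' ∧ C x' y'') := by
  obtain ⟨m', hrtm, hopt⟩ := h1.2 x x' m a htr hxm
  obtain ⟨v1, hrtv1, hm'v1⟩ := semi_lift h2 hmv hrtm
  rcases hopt with ⟨ha, hxm', hx'm'⟩ | ⟨m'', htrm', hxm', hx'm''⟩
  · exact ⟨v1, hrtv1, Or.inl ⟨ha, hC _ _ _ hxm' hm'v1, hC _ _ _ hx'm' hm'v1⟩⟩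
  · obtain ⟨v2, hrtv2, hoptv⟩ := h2.2 m' m'' v1 a htrm' hm'v1
    rcases hoptv with ⟨ha, hm'v2, hm''v2⟩ | ⟨v3, htrv2, hm'v2, hm''v3⟩
    · exact ⟨v2, hrtv1.trans hrtv2,
        Or.inl ⟨ha, hC _ _ _ hxm' hm'v2, hC _ _ _ hx'm'' hm''v2⟩⟩
    · exact ⟨v2, hrtv1.trans hrtv2,
        Or.inr ⟨v3, htrv2, hC _ _ _ hxm' hm'v2, hC _ _ _ hx'm'' hm''v3⟩⟩

theorem bsim_trans {Tr : X → Option A → X → Prop} {u m v : X}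
    (h1 : Bsim Tr u m) (h2 : Bsim Tr m v) : Bsim Tr u v := by
  obtain ⟨R1, hR1, hum⟩ := h1
  obtain ⟨R2, hR2, hmv⟩ := h2
  set C : X → X → Prop := fun p r =>
    (∃ q, R1 p q ∧ R2 q r) ∨ (∃ q, R2 p q ∧ R1 q r) with hCdef
  refine ⟨C, ⟨?_, ?_⟩, Or.inl ⟨m, hum, hmv⟩⟩
  · rintro p r (⟨q, hpq, hqr⟩ | ⟨q, hpq, hqr⟩)
    · exact Or.inr ⟨q, hR2.1 hqr, hR1.1 hpq⟩
    · exact Or.inl ⟨q, hR1.1 hqr, hR2.1 hpq⟩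
  · rintro x x' y a htr (⟨q, hpq, hqr⟩ | ⟨q, hpq, hqr⟩)
    · exact semi_comp_aux hR1 hR2 htr hpq hqr C (fun p q r h1 h2 => Or.inl ⟨q, h1, h2⟩)
    · exact semi_comp_aux hR2 hR1 htr hpq hqr C (fun p q r h1 h2 => Or.inr ⟨q, h1, h2⟩)

theorem branching_isSemi {Tr : X → Option A → X → Prop} {R : X → X → Prop}
    (hR : IsBranchingBisim Tr R) : IsSemi Tr R := by
  refine ⟨hR.1, fun x x' y a htr hxy => ?_⟩
  rcases hR.2 x x' y a htr hxy with ⟨ha, hx'y⟩ | ⟨y', y'', hrt, htr', h1, h2⟩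
  · exact ⟨y, Relation.ReflTransGen.refl, Or.inl ⟨ha, hxy, hx'y⟩⟩
  · exact ⟨y', hrt, Or.inr ⟨y'', htr', h1, h2⟩⟩

/-! ### The stuttering lemma -/

/-- A τ-chain from `u` to `v` through the list of states `l`. -/
inductive TauChain (Tr : X → Option A → X → Prop) : X → List X → X → Prop
  | nil (x : X) : TauChain Tr x [] x
  | cons {x y : X} {l : List X} {v : X} :
      Tr x none y → TauChain Tr y l v → TauChain Tr x (y :: l) v

theorem TauChain.snoc {Tr : X → Option A → X → Prop} {u v w : X} {l : List X}
    (h : TauChain Tr u l v) (hs : Tr v none w) : TauChain Tr u (l ++ [w]) w := by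
  induction h with
  | nil x => exact TauChain.cons hs (TauChain.nil w)
  | cons hstep _ ih => exact TauChain.cons hstep (ih hs)

theorem tauChain_of_rtg {Tr : X → Option A → X → Prop} {u v : X} (h : RTG Tr u v) :
    ∃ l, TauChain Tr u l v := by
  induction h with
  | refl => exact ⟨[], TauChain.nil u⟩
  | tail _ hstep ih =>
    obtain ⟨l, hl⟩ := ih
    exact ⟨l ++ [_], hl.snoc hstep⟩

theorem TauChain.rtg_of_mem {Tr : X → Option A → X → Prop} {u v : X} {l : List X}
    (h : TauChain Tr u l v) : ∀ y ∈ u :: l, RTG Tr u y ∧ RTG Tr y v := by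
  induction h with
  | nil x =>
    intro y hy
    rw [List.mem_singleton] at hy
    subst hy
    exact ⟨Relation.ReflTransGen.refl, Relation.ReflTransGen.refl⟩
  | cons hstep hc ih =>
    rename_i x y0 l' v'
    intro y hy
    rcases List.mem_cons.mp hy with rfl | hy'
    · refine ⟨Relation.ReflTransGen.refl, ?_⟩
      exact Relation.ReflTransGen.head hstep (ih y0 (List.mem_cons_self)).2
    · obtain ⟨ha, hb⟩ := ih y hy'
      exact ⟨Relation.ReflTransGen.head hstep ha, hb⟩

theorem tauChain_stutter {Tr : X → Option A → X → Prop} {u v : X} {l : List X}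
    (h : TauChain Tr u l v) (hb : Bsim Tr u v) : ∀ y ∈ u :: l, Bsim Tr u y := by
  set R : X → X → Prop := fun p q =>
    Bsim Tr p q ∨ (p = u ∧ q ∈ u :: l) ∨ (q = u ∧ p ∈ u :: l) with hRdef
  have hsemi : IsSemi Tr R := by
    constructor
    · rintro p q (hpq | ⟨rfl, hq⟩ | ⟨rfl, hp⟩)
      · exact Or.inl (bsim_symm hpq)
      · exact Or.inr (Or.inr ⟨rfl, hq⟩)
      · exact Or.inr (Or.inl ⟨rfl, hp⟩)
    · rintro x x' y a htr (hxy | ⟨rfl, hy⟩ | ⟨rfl, hx⟩)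
      · obtain ⟨y', hrt, hopt⟩ := (bsim_isSemi Tr).2 x x' y a htr hxy
        refine ⟨y', hrt, ?_⟩
        rcases hopt with ⟨ha, h1, h2⟩ | ⟨y'', htr', h1, h2⟩
        · exact Or.inl ⟨ha, Or.inl h1, Or.inl h2⟩
        · exact Or.inr ⟨y'', htr', Or.inl h1, Or.inl h2⟩
      · -- x = u, y ∈ u :: l : match a transition of u from y
        obtain ⟨-, hyv⟩ := h.rtg_of_mem y hy
        obtain ⟨v1, hrtv1, hopt⟩ := (bsim_isSemi Tr).2 x x' v a htr hb
        refine ⟨v1, hyv.trans hrtv1, ?_⟩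
        rcases hopt with ⟨ha, h1, h2⟩ | ⟨v'', htr', h1, h2⟩
        · exact Or.inl ⟨ha, Or.inl h1, Or.inl h2⟩
        · exact Or.inr ⟨v'', htr', Or.inl h1, Or.inl h2⟩
      · -- y = u, x ∈ u :: l : match via the chain u ⇒ x and reflexivity
        obtain ⟨hux, -⟩ := h.rtg_of_mem x hx
        exact ⟨x, hux, Or.inr ⟨x', htr, Or.inl (bsim_refl Tr x), Or.inl (bsim_refl Tr x')⟩⟩
  intro y hy
  have hRy : R u y := Or.inr (Or.inl ⟨rfl, hy⟩)
  exact ⟨R, hsemi, hRy⟩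

theorem seg_lemma {Tr : X → Option A → X → Prop} {z w w' : X}
    (hrt : RTG Tr w w') (h1 : Bsim Tr z w) (h2 : Bsim Tr z w') :
    ∃ l, TauChain Tr w l w' ∧ ∀ y ∈ w :: l, Bsim Tr z y := by
  obtain ⟨l, hl⟩ := tauChain_of_rtg hrt
  refine ⟨l, hl, fun y hy => ?_⟩
  exact bsim_trans h1 (tauChain_stutter hl (bsim_trans (bsim_symm h1) h2) y hy)

/-! ### Transfer of executions along semi-branching bisimilarity -/

/-- The end state of a step list. -/
def endSt (x : X) (l : List (Option A × X)) : X := stateOf x l l.length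

@[simp] theorem endSt_nil (x : X) : endSt x ([] : List (Option A × X)) = x := rfl

@[simp] theorem endSt_cons (x : X) (a : Option A) (y : X) (l : List (Option A × X)) :
    endSt x ((a, y) :: l) = endSt y l := by
  show stateOf x ((a, y) :: l) (l.length + 1) = _
  rw [stateOf_cons]; rfl

theorem endSt_append (x : X) (s t : List (Option A × X)) :
    endSt x (s ++ t) = endSt (endSt x s) t := by
  show stateOf x (s ++ t) (s ++ t).length = _
  rw [List.length_append, stateOf_append]; rfl

theorem dF_append' (u : X) (s t : List (Option A × X)) :
    dF u (s ++ t) = dF u s ++ dF (endSt u s) t := dF_append u s t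

theorem tauChain_chainFrom {Tr : X → Option A → X → Prop} {u v : X} {l : List X}
    (h : TauChain Tr u l v) {t : List (Option A × X)} (ht : ChainFrom Tr v t) :
    ChainFrom Tr u (l.map (fun y => ((none : Option A), y)) ++ t) := by
  induction h with
  | nil x => simpa using ht
  | cons hstep _ ih => exact ChainFrom.cons hstep (ih ht)

theorem endSt_tau {Tr : X → Option A → X → Prop} {u v : X} {l : List X}
    (h : TauChain Tr u l v) : endSt u (l.map (fun y => ((none : Option A), y))) = v := by
  induction h with
  | nil x => rfl
  | cons hstep _ ih => simpa using ih

theorem endSt_tau_f {Q : Type} (f : X → Q) {Tr : X → Option A → X → Prop} {u v : X} {l : List X}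
    (h : TauChain Tr u l v) :
    endSt (f u) (l.map (fun y => ((none : Option A), f y))) = f v := by
  induction h with
  | nil x => rfl
  | cons hstep _ ih => simpa using ih

theorem dF_const_tau {Q : Type} (f : X → Q) {c : Q} :
    ∀ (l : List X), (∀ y ∈ l, f y = c) →
    dF c (l.map (fun y => ((none : Option A), f y))) = [] := by
  intro l
  induction l generalizing c with
  | nil => intro _; rfl
  | cons y l ih =>
    intro h
    rw [List.map_cons, dF_cons, if_pos ⟨rfl, h y (List.mem_cons_self)⟩]
    have hy : f y = c := h y (List.mem_cons_self)
    rw [hy]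
    exact ih (fun y' hy' => h y' (List.mem_cons_of_mem _ hy'))

theorem constr1 {Q : Type} {Tr : X → Option A → X → Prop} (f : X → Q)
    (hf : ∀ u v, Bsim Tr u v → f u = f v) :
    ∀ (steps : List (Option A × X)) (z w : X), Bsim Tr z w → ChainFrom Tr z steps →
    (∀ s ∈ steps, s.1 = none) →
    ∃ steps', ChainFrom Tr w steps' ∧ (∀ s ∈ steps', s.1 = (none : Option A)) ∧
      dF (f w) (steps'.map (fun s => (s.1, f s.2))) =
        dF (f z) (steps.map (fun s => (s.1, f s.2))) ∧
      Bsim Tr (endSt z steps) (endSt w steps') := by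
  intro steps
  induction steps with
  | nil =>
    intro z w hzw _ _
    exact ⟨[], ChainFrom.nil w, by simp, by rw [hf z w hzw], by simpa using hzw⟩
  | cons e rest ih =>
    intro z w hzw hch hlab
    obtain ⟨a1, z1⟩ := e
    have ha1 : a1 = none := hlab _ (List.mem_cons_self)
    subst ha1
    cases hch with
    | cons htr hch' =>
    obtain ⟨w1, hrt, hopt⟩ := (bsim_isSemi Tr).2 z z1 w none htr hzw
    have hlab' : ∀ s ∈ rest, s.1 = (none : Option A) :=
      fun s hs => hlab s (List.mem_cons_of_mem _ hs)
    rcases hopt with ⟨-, hzw1, hz1w1⟩ | ⟨w2, htr2, hzw1, hz1w2⟩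
    · -- stuttering option
      obtain ⟨l, htc, hmem⟩ := seg_lemma hrt hzw hzw1
      obtain ⟨steps'', hch'', hlab'', hdf'', hend''⟩ := ih z1 w1 hz1w1 hch' hlab'
      have hconst : ∀ y ∈ l, f y = f w := fun y hy =>
        ((hf z y (hmem y (List.mem_cons_of_mem _ hy))).symm).trans (hf z w hzw)
      refine ⟨l.map (fun y => ((none : Option A), y)) ++ steps'',
        tauChain_chainFrom htc hch'', ?_, ?_, ?_⟩
      · intro s hs
        rcases List.mem_append.mp hs with hs | hs
        · obtain ⟨y, -, rfl⟩ := List.mem_map.mp hs; rfl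
        · exact hlab'' s hs
      · rw [List.map_append, dF_append']
        have hmm : (l.map (fun y => ((none : Option A), y))).map (fun s => (s.1, f s.2))
            = l.map (fun y => ((none : Option A), f y)) := by
          rw [List.map_map]; rfl
        rw [hmm, dF_const_tau f l hconst, List.nil_append, endSt_tau_f f htc]
        rw [hdf'', List.map_cons, dF_cons,
          if_pos ⟨rfl, ((hf z1 w1 hz1w1).trans (hf z w1 hzw1).symm : f z1 = f z)⟩]
      · rw [endSt_cons, endSt_append, endSt_tau htc]
        exact hend''
    · -- moving option
      obtain ⟨l, htc, hmem⟩ := seg_lemma hrt hzw hzw1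
      obtain ⟨steps'', hch'', hlab'', hdf'', hend''⟩ := ih z1 w2 hz1w2 hch' hlab'
      have hconst : ∀ y ∈ l, f y = f w := fun y hy =>
        ((hf z y (hmem y (List.mem_cons_of_mem _ hy))).symm).trans (hf z w hzw)
      refine ⟨l.map (fun y => ((none : Option A), y)) ++ ((none, w2) :: steps''),
        tauChain_chainFrom htc (ChainFrom.cons htr2 hch''), ?_, ?_, ?_⟩
      · intro s hs
        rcases List.mem_append.mp hs with hs | hs
        · obtain ⟨y, -, rfl⟩ := List.mem_map.mp hs; rfl
        · rcases List.mem_cons.mp hs with rfl | hs'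
          · rfl
          · exact hlab'' s hs'
      · rw [List.map_append, dF_append']
        have hmm : (l.map (fun y => ((none : Option A), y))).map (fun s => (s.1, f s.2))
            = l.map (fun y => ((none : Option A), f y)) := by
          rw [List.map_map]; rfl
        rw [hmm, dF_const_tau f l hconst, List.nil_append, endSt_tau_f f htc]
        have e1 : f w2 = f z1 := (hf z1 w2 hz1w2).symm
        have e2 : f w1 = f z := (hf z w1 hzw1).symm
        rw [e1] at hdf''
        rw [List.map_cons, List.map_cons, dF_cons, dF_cons, e1, e2, hdf'']
      · rw [endSt_cons, endSt_append, endSt_tau htc, endSt_cons]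
        exact hend''

theorem chain_split {Tr : X → Option A → X → Prop} :
    ∀ {s t : List (Option A × X)} {z : X}, ChainFrom Tr z (s ++ t) →
      ChainFrom Tr z s ∧ ChainFrom Tr (endSt z s) t := by
  intro s
  induction s with
  | nil => intro t z h; exact ⟨ChainFrom.nil z, by simpa using h⟩
  | cons e s ih =>
    intro t z h
    obtain ⟨a, y⟩ := e
    cases h with
    | cons htr h' =>
      obtain ⟨h1, h2⟩ := ih h'
      exact ⟨ChainFrom.cons htr h1, by rwa [endSt_cons]⟩

theorem endSt_map_f {Q : Type} (f : X → Q) :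
    ∀ (s : List (Option A × X)) (x : X),
      endSt (f x) (s.map (fun s => (s.1, f s.2))) = f (endSt x s) := by
  intro s
  induction s with
  | nil => intro x; rfl
  | cons e s ih =>
    intro x
    obtain ⟨a, y⟩ := e
    rw [List.map_cons, endSt_cons, endSt_cons, ih y]

theorem dF_vis (u : Y) (a0 : A) (c : Y) :
    dF u [((some a0 : Option A), c)] = [(some a0, c)] := by
  rw [dF_singleton, if_neg (by simp)]

theorem constr2 {Q : Type} {Tr : X → Option A → X → Prop} (f : X → Q)
    (hf : ∀ u v, Bsim Tr u v → f u = f v) (z w : X) (hzw : Bsim Tr z w)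
    (pre : List (Option A × X)) (a0 : A) (t : X)
    (hch : ChainFrom Tr z (pre ++ [((some a0 : Option A), t)]))
    (hlab : ∀ s ∈ pre, s.1 = (none : Option A)) :
    ∃ (pre' : List (Option A × X)) (t' : X),
      ChainFrom Tr w (pre' ++ [((some a0 : Option A), t')]) ∧
      (∀ s ∈ pre', s.1 = (none : Option A)) ∧
      dF (f w) ((pre' ++ [((some a0 : Option A), t')]).map (fun s => (s.1, f s.2))) =
        dF (f z) ((pre ++ [((some a0 : Option A), t)]).map (fun s => (s.1, f s.2))) := by
  obtain ⟨hch1, hch2⟩ := chain_split hch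
  have htr : Tr (endSt z pre) (some a0) t := by
    cases hch2 with
    | cons htr _ => exact htr
  obtain ⟨pre', hch', hlab', hdf', hend'⟩ := constr1 f hf pre z w hzw hch1 hlab
  obtain ⟨w1, hrt, hopt⟩ := (bsim_isSemi Tr).2 (endSt z pre) t (endSt w pre') (some a0) htr hend'
  rcases hopt with ⟨ha, -, -⟩ | ⟨w2, htr2, hzw1, htw2⟩
  · exact absurd ha (by simp)
  obtain ⟨l, htc, hmem⟩ := seg_lemma hrt hend' hzw1
  have hmm : (l.map (fun y => ((none : Option A), y))).map (fun s => (s.1, f s.2))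
      = l.map (fun y => ((none : Option A), f y)) := by
    rw [List.map_map]; rfl
  have hconst2 : ∀ y ∈ l, f y = f (endSt w pre') := fun y hy =>
    ((hf _ y (hmem y (List.mem_cons_of_mem _ hy))).symm).trans (hf _ _ hend')
  refine ⟨pre' ++ l.map (fun y => ((none : Option A), y)), w2, ?_, ?_, ?_⟩
  · rw [List.append_assoc]
    exact hch'.append (tauChain_chainFrom htc (ChainFrom.cons htr2 (ChainFrom.nil _)))
  · intro s hs
    rcases List.mem_append.mp hs with hs | hs
    · exact hlab' s hs
    · obtain ⟨y, -, rfl⟩ := List.mem_map.mp hs; rfl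
  · rw [List.append_assoc]
    simp only [List.map_append, List.map_cons, List.map_nil, dF_append']
    rw [endSt_map_f, hmm, dF_const_tau f l hconst2, List.nil_append, endSt_tau_f f htc]
    rw [endSt_map_f]
    rw [dF_vis, dF_vis]
    rw [hdf', ← hf t w2 htw2]

/-- invariance of the image of `ltsAlpha` under semi-branching bisimilarity. -/
theorem bsim_alpha_subset {Tr : X → Option A → X → Prop} {Q : Type} (f : X → Q)
    (hf : ∀ u v, Bsim Tr u v → f u = f v) {u v : X} (h : Bsim Tr u v) :
    PathQuot.map f '' ltsAlpha Tr u ⊆ PathQuot.map f '' ltsAlpha Tr v := by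
  rintro c ⟨d, ⟨p, hexec, hshape, rfl⟩, rfl⟩
  have hstart : p.start = u := hexec.1
  have hchain : ChainFrom Tr u (toSteps p) := exec_chainFrom hexec
  set L := toSteps p with hL
  rcases hshape with ⟨a0, n, hword⟩ | ⟨n, hword⟩
  · -- trace in τ* a
    have hmfst : L.map Prod.fst = List.replicate n none ++ [some a0] := by
      rw [hL, map_fst_toSteps, hword]
    have hlen : L.length = n + 1 := by
      have := congrArg List.length hmfst; simpa using this
    have hnlt : n < L.length := by omega
    have hdecomp : L = L.take n ++ [L[n]] := by
      conv_lhs => rw [← List.take_append_drop n L]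
      congr 1
      rw [List.drop_eq_getElem_cons hnlt, List.drop_eq_nil_of_le (by omega)]
    have hlab : ∀ s ∈ L.take n, s.1 = (none : Option A) := by
      intro s hs
      have h1 : s.1 ∈ (L.take n).map Prod.fst := List.mem_map.mpr ⟨s, hs, rfl⟩
      rw [List.map_take, hmfst, List.take_left' (by simp)] at h1
      exact List.eq_of_mem_replicate h1
    have he1 : (L[n]).1 = some a0 := by
      have h1 : (L.map Prod.fst)[n]'(by simpa using hnlt) = some a0 := by
        simp only [hmfst]
        rw [List.getElem_append_right (by simp)]
        simp
      simpa using h1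
    have hpair : L[n] = ((some a0 : Option A), (L[n]).2) := Prod.ext he1 rfl
    have hdecomp2 : L = L.take n ++ [((some a0 : Option A), (L[n]).2)] := by
      conv_lhs => rw [hdecomp, hpair]
    have hch2 : ChainFrom Tr u (L.take n ++ [((some a0 : Option A), (L[n]).2)]) := by
      rw [← hdecomp2]; exact hchain
    obtain ⟨pre', t', hch', hlab', hdf'⟩ := constr2 f hf u v h (L.take n) a0 ((L[n]).2) hch2 hlab
    refine ⟨PathQuot.mk (ofList v (pre' ++ [((some a0 : Option A), t')])), ⟨_, chainFrom_exec hch', ?_, rfl⟩, ?_⟩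
    · refine Or.inl ⟨a0, pre'.length, ?_⟩
      rw [ofList_word, List.map_append, List.map_cons, List.map_nil]
      congr 1
      have := List.eq_replicate_of_mem (l := pre'.map Prod.fst) (a := (none : Option A))
        (fun b hb => by
          obtain ⟨s, hs, rfl⟩ := List.mem_map.mp hb
          exact hlab' s hs)
      rw [this]
      simp
    · rw [pathQuot_map_eq_iff]
      constructor
      · rw [ofList_start, hstart]
        exact (hf u v h).symm
      · rw [ofList_start, hstart, toSteps_ofList, hdf', ← hL, ← hdecomp2]
  · -- trace in τ*
    have hmfst : L.map Prod.fst = List.replicate n none := by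
      rw [hL, map_fst_toSteps, hword]
    have hlab : ∀ s ∈ L, s.1 = (none : Option A) := by
      intro s hs
      have h1 : s.1 ∈ L.map Prod.fst := List.mem_map.mpr ⟨s, hs, rfl⟩
      rw [hmfst] at h1
      exact List.eq_of_mem_replicate h1
    obtain ⟨steps', hch', hlab', hdf', -⟩ := constr1 f hf L u v h hchain hlab
    refine ⟨PathQuot.mk (ofList v steps'), ⟨_, chainFrom_exec hch', ?_, rfl⟩, ?_⟩
    · refine Or.inr ⟨steps'.length, ?_⟩
      rw [ofList_word]
      have := List.eq_replicate_of_mem (l := steps'.map Prod.fst) (a := (none : Option A))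
        (fun b hb => by
          obtain ⟨s, hs, rfl⟩ := List.mem_map.mp hb
          exact hlab' s hs)
      rw [this]
      simp
    · rw [pathQuot_map_eq_iff]
      constructor
      · rw [ofList_start, hstart]
        exact (hf u v h).symm
      · rw [ofList_start, hstart, toSteps_ofList, hdf', ← hL]

/-- Semi-branching bisimilarity as a setoid. -/
def bsimSetoid (Tr : X → Option A → X → Prop) : Setoid X :=
  ⟨Bsim Tr, ⟨bsim_refl Tr, fun h => bsim_symm h, fun h1 h2 => bsim_trans h1 h2⟩⟩

end Stmt19Infra

theorem stmt19 {A X : Type} (Tr : X → Option A → X → Prop) (x x' : X) :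
    BranchingBisimilar Tr x x' ↔
    ∃ (Y : Type) (β : Y → Set (PathQuot A Y)) (f : X → Y),
      (∀ z : X, β (f z) = PathQuot.map f '' ltsAlpha Tr z) ∧ f x = f x' := by
  constructor
  · rintro ⟨R, hR, hxx'⟩
    have hx : Bsim Tr x x' := ⟨R, branching_isSemi hR, hxx'⟩
    refine ⟨Quotient (bsimSetoid Tr),
      fun y => PathQuot.map (Quotient.mk (bsimSetoid Tr)) '' ltsAlpha Tr y.out,
      Quotient.mk (bsimSetoid Tr), fun z => ?_, Quotient.sound hx⟩
    have hker : ∀ u v : X, Bsim Tr u v → Quotient.mk (bsimSetoid Tr) u = Quotient.mk (bsimSetoid Tr) v :=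
      fun u v h => Quotient.sound h
    have h1 : Bsim Tr (Quotient.mk (bsimSetoid Tr) z).out z :=
      (Quotient.mk_out (s := bsimSetoid Tr) z : (bsimSetoid Tr).r _ z)
    exact Set.Subset.antisymm (bsim_alpha_subset _ hker h1) (bsim_alpha_subset _ hker (bsim_symm h1))
  · rintro ⟨Y, β, f, hβ, hf⟩
    exact ⟨fun u v => f u = f v, backward_bisim β f hβ, hf⟩

end PaperBB
end
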